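/- arXiv:0901.4755 — 7 statements merged into one kernel-verified Lean document; each statement's English description precedes it below -/
import Mathlib

section
/- Let k be a commutative ring, g a Lie algebra over k that is finitely presented as a k-module, and R a commutative k-algebra that is flat as a k-module. Then the canonical R-linear map Ctd_k(g) ⊗_k R → Ctd_R(g ⊗_k R), which sends χ ⊗ r to the endomorphism r • (χ ⊗ id_R) of the base-changed Lie algebra g ⊗_k R, is bijective (an isomorphism of R-modules, and in fact of R-algebras). -/
open TensorProduct

/-- The centroid of a Lie algebra `g` over `k`: the `k`-submodule of `End_k(g)`
consisting of the `χ` with `χ ⁅x, y⁆ = ⁅χ x, y⁆ = ⁅x, χ y⁆` for all `x, y`. -/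
def lieCentroid (k g : Type*) [CommRing k] [LieRing g] [LieAlgebra k g] :
    Submodule k (g →ₗ[k] g) where
  carrier := {χ | ∀ x y : g, χ ⁅x, y⁆ = ⁅χ x, y⁆ ∧ χ ⁅x, y⁆ = ⁅x, χ y⁆}
  add_mem' := by
    intro χ ψ hχ hψ x y
    constructor
    · simp only [LinearMap.add_apply, add_lie]
      rw [(hχ x y).1, (hψ x y).1]
    · simp only [LinearMap.add_apply, lie_add]
      rw [(hχ x y).2, (hψ x y).2]
  zero_mem' := by intro x y; simp
  smul_mem' := by
    intro c χ hχ x y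
    constructor
    · simp only [LinearMap.smul_apply, smul_lie]
      rw [(hχ x y).1]
    · simp only [LinearMap.smul_apply, lie_smul]
      rw [(hχ x y).2]

/-! ### Auxiliary results on the canonical map `R ⊗ Hom_k(M,N) → Hom_R(R⊗M, R⊗N)` -/

section Nu
variable {k : Type*} [CommRing k] {R : Type*} [CommRing R] [Algebra k R]
variable {M : Type*} [AddCommGroup M] [Module k M]
variable {N : Type*} [AddCommGroup N] [Module k N]

lemma LieAux.nu_tmul (r : R) (χ : M →ₗ[k] N) :
    LinearMap.tensorProduct k R M N (r ⊗ₜ[k] χ) = r • χ.baseChange R := by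
  simp [LinearMap.tensorProduct]

variable {M' : Type*} [AddCommGroup M'] [Module k M']

lemma LieAux.nu_naturality (φ : M' →ₗ[k] M) (z : R ⊗[k] (M →ₗ[k] N)) :
    LinearMap.tensorProduct k R M' N ((LinearMap.lcomp k N φ).lTensor R z)
      = (LinearMap.tensorProduct k R M N z).comp (φ.baseChange R) := by
  induction z with
  | zero => simp
  | tmul r χ =>
      simp only [LinearMap.lTensor_tmul, LieAux.nu_tmul, LinearMap.lcomp_apply',
        LinearMap.baseChange_comp, LinearMap.smul_comp]
  | add x y hx hy => rw [map_add, map_add, hx, hy, map_add, LinearMap.add_comp]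

section Free

variable (k) (ι : Type*) [Fintype ι] [DecidableEq ι]

/-- the standard basis vector -/
def LieAux.ee (i : ι) : ι → k := fun j => if i = j then 1 else 0

variable {ι}

open LieAux in
/-- `y ↦ (x ↦ x i • y)` -/
def LieAux.JJ (i : ι) : N →ₗ[k] ((ι → k) →ₗ[k] N) where
  toFun y := (LinearMap.proj i).smulRight y
  map_add' y z := LinearMap.ext fun x => by
    simp only [LinearMap.smulRight_apply, LinearMap.add_apply]; exact smul_add _ _ _
  map_smul' c y := LinearMap.ext fun x => by
    simp only [LinearMap.smulRight_apply, LinearMap.smul_apply, RingHom.id_apply]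
    exact smul_comm _ _ _

variable {k}

open LieAux in
lemma LieAux.free_ext {P : Type*} [AddCommGroup P] [Module R P]
    {F G : (R ⊗[k] (ι → k)) →ₗ[R] P}
    (h : ∀ i, F (1 ⊗ₜ[k] ee k ι i) = G (1 ⊗ₜ[k] ee k ι i)) : F = G := by
  have key : ∀ x : ι → k, F (1 ⊗ₜ[k] x) = G (1 ⊗ₜ[k] x) := by
    intro x
    have hx : ((1:R) ⊗ₜ[k] x : R ⊗[k] (ι → k))
        = ∑ i, algebraMap k R (x i) • ((1:R) ⊗ₜ[k] (ee k ι i)) := by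
      conv_lhs => rw [pi_eq_sum_univ x]
      rw [tmul_sum]
      refine Finset.sum_congr rfl fun i _ => ?_
      rw [← smul_tmul, Algebra.smul_def, mul_one, smul_tmul', smul_eq_mul, mul_one]
      rfl
    rw [hx, map_sum, map_sum]
    exact Finset.sum_congr rfl fun i _ => by
      rw [map_smul, map_smul, h i]
  ext z
  induction z with
  | zero => simp
  | tmul r x =>
      have : r ⊗ₜ[k] x = r • ((1:R) ⊗ₜ[k] x) := by rw [smul_tmul', smul_eq_mul, mul_one]
      rw [this, map_smul, map_smul, key]
  | add x y hx hy => rw [map_add, map_add, hx, hy]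

open LieAux in
lemma LieAux.nu_JJ (i j : ι) (w : R ⊗[k] N) :
    LinearMap.tensorProduct k R (ι → k) N ((JJ k i).baseChange R w) (1 ⊗ₜ[k] ee k ι j)
      = (ee k ι j i) • w := by
  induction w with
  | zero => simp
  | tmul s y =>
      rw [LinearMap.baseChange_tmul, nu_tmul]
      simp only [LinearMap.smul_apply, LinearMap.baseChange_tmul]
      rw [show (JJ k i y) (ee k ι j) = ee k ι j i • y from rfl, tmul_smul, smul_comm,
        smul_tmul', smul_eq_mul, mul_one]
  | add x y hx hy => rw [map_add, map_add, LinearMap.add_apply, hx, hy, smul_add]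

open LieAux in
lemma LieAux.sumJJ (χ : (ι → k) →ₗ[k] N) : ∑ i, JJ k i (χ (ee k ι i)) = χ := by
  refine LinearMap.ext fun x => ?_
  rw [LinearMap.sum_apply]
  conv_rhs => rw [pi_eq_sum_univ x]
  rw [map_sum]
  refine Finset.sum_congr rfl fun i _ => ?_
  rw [map_smul]
  rfl

set_option linter.unusedSectionVars false in
open LieAux in
variable (k R N) (ι) in
lemma LieAux.nu_free_bijective :
    Function.Bijective (LinearMap.tensorProduct k R (ι → k) N) := by
  classical
  set nuF := LinearMap.tensorProduct k R (ι → k) N with hnuF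
  let inv : ((R ⊗[k] (ι → k)) →ₗ[R] (R ⊗[k] N)) → R ⊗[k] ((ι → k) →ₗ[k] N) :=
    fun f => ∑ i, (JJ k i).baseChange R (f (1 ⊗ₜ[k] ee k ι i))
  have hleft : ∀ z, inv (nuF z) = z := by
    intro z
    induction z with
    | zero => simp [inv]
    | tmul r χ =>
        have h1 : ∀ i, nuF (r ⊗ₜ[k] χ) (1 ⊗ₜ[k] ee k ι i) = r ⊗ₜ[k] χ (ee k ι i) := by
          intro i
          rw [hnuF, nu_tmul]
          simp only [LinearMap.smul_apply, LinearMap.baseChange_tmul]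
          rw [smul_tmul', smul_eq_mul, mul_one]
        simp only [inv, h1, LinearMap.baseChange_tmul]
        rw [← tmul_sum, sumJJ]
    | add x y hx hy =>
        have hadd : ∀ f g : ((R ⊗[k] (ι → k)) →ₗ[R] (R ⊗[k] N)),
            inv (f + g) = inv f + inv g := by
          intro f g
          simp only [inv, LinearMap.add_apply, map_add, Finset.sum_add_distrib]
        rw [map_add, hadd, hx, hy]
  have hright : ∀ f, nuF (inv f) = f := by
    intro f
    apply free_ext
    intro j
    have hs : nuF (inv f) = ∑ i, nuF ((JJ k i).baseChange R (f (1 ⊗ₜ[k] ee k ι i))) :=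
      map_sum nuF _ _
    rw [hs, LinearMap.sum_apply]
    have h2 : ∀ i, nuF ((JJ k i).baseChange R (f (1 ⊗ₜ[k] ee k ι i))) (1 ⊗ₜ[k] ee k ι j)
        = ee k ι j i • f (1 ⊗ₜ[k] ee k ι i) := fun i => nu_JJ i j _
    simp only [h2]
    rw [Finset.sum_eq_single j]
    · rw [show ee k ι j j = (1:k) from if_pos rfl, one_smul]
    · intro b _ hb
      rw [show ee k ι j b = (0:k) from if_neg (fun h => hb h.symm), zero_smul]
    · exact fun h => absurd (Finset.mem_univ j) h
  exact ⟨fun a b h => by rw [← hleft a, h, hleft b], fun f => ⟨inv f, hright f⟩⟩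

end Free

open LieAux in
variable (k R M N) in
theorem LieAux.nu_injective [Module.Finite k M] [Module.Flat k R] :
    Function.Injective (LinearMap.tensorProduct k R M N) := by
  classical
  obtain ⟨s, hs⟩ := Module.Finite.fg_top (R := k) (M := M)
  let q : ({x // x ∈ s} → k) →ₗ[k] M := Fintype.linearCombination k Subtype.val
  have hq : Function.Surjective q := by
    rw [← LinearMap.range_eq_top]
    rw [show LinearMap.range q = _ from Fintype.range_linearCombination k Subtype.val]
    rw [Subtype.range_val]
    exact hs
  have hpc : Function.Injective (LinearMap.lcomp k N q) := by
    intro χ ψ hh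
    ext m
    obtain ⟨x, rfl⟩ := hq m
    exact DFunLike.congr_fun hh x
  have hT : Function.Injective ((LinearMap.lcomp k N q).lTensor R) :=
    Module.Flat.lTensor_preserves_injective_linearMap _ hpc
  intro a b hab
  apply hT
  exact (nu_free_bijective k R N {x // x ∈ s}).injective
    (by rw [nu_naturality, nu_naturality, hab])

open LieAux in
variable (k R M N) in
theorem LieAux.nu_surjective [Module.FinitePresentation k M] [Module.Flat k R] :
    Function.Surjective (LinearMap.tensorProduct k R M N) := by
  classical
  obtain ⟨s, hs⟩ := Module.Finite.fg_top (R := k) (M := M)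
  let q : ({x // x ∈ s} → k) →ₗ[k] M := Fintype.linearCombination k Subtype.val
  have hq : Function.Surjective q := by
    rw [← LinearMap.range_eq_top]
    rw [show LinearMap.range q = _ from Fintype.range_linearCombination k Subtype.val]
    rw [Subtype.range_val]
    exact hs
  obtain ⟨t, ht⟩ := Module.FinitePresentation.fg_ker q hq
  let p : ({x // x ∈ t} → k) →ₗ[k] ({x // x ∈ s} → k) := Fintype.linearCombination k Subtype.val
  have hrange : LinearMap.range p = LinearMap.ker q := by
    rw [show LinearMap.range p = _ from Fintype.range_linearCombination k Subtype.val]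
    rw [Subtype.range_val]
    exact ht
  have hqp : q ∘ₗ p = 0 := by
    apply LinearMap.ext; intro x
    have : p x ∈ LinearMap.ker q := hrange ▸ LinearMap.mem_range_self p x
    simpa using this
  have hexact : Function.Exact (LinearMap.lcomp k N q) (LinearMap.lcomp k N p) := by
    intro ψ
    constructor
    · intro h0
      have hle : LinearMap.ker q ≤ LinearMap.ker ψ := by
        intro y hy
        rw [← hrange] at hy
        obtain ⟨x, rfl⟩ := hy
        exact DFunLike.congr_fun h0 x
      let e := q.quotKerEquivOfSurjective hq
      refine ⟨((LinearMap.ker q).liftQ ψ hle).comp e.symm.toLinearMap, ?_⟩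
      apply LinearMap.ext; intro x
      have h1 : e ((LinearMap.ker q).mkQ x) = q x := rfl
      have h2 : e.symm (q x) = (LinearMap.ker q).mkQ x := by rw [← h1, e.symm_apply_apply]
      show ((LinearMap.ker q).liftQ ψ hle) (e.symm (q x)) = ψ x
      rw [h2]
      exact DFunLike.congr_fun ((LinearMap.ker q).liftQ_mkQ ψ hle) x
    · rintro ⟨χ, rfl⟩
      show (χ ∘ₗ q) ∘ₗ p = 0
      rw [LinearMap.comp_assoc, hqp, LinearMap.comp_zero]
  have hTexact := Module.Flat.lTensor_exact (M := R) hexact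
  intro f
  obtain ⟨u, hu⟩ := (nu_free_bijective k R N {x // x ∈ s}).surjective (f.comp (q.baseChange R))
  have h0 : (LinearMap.lcomp k N p).lTensor R u = 0 := by
    apply (nu_free_bijective k R N {x // x ∈ t}).injective
    rw [nu_naturality, hu, map_zero]
    rw [LinearMap.comp_assoc, ← LinearMap.baseChange_comp, hqp]
    rw [LinearMap.baseChange_zero, LinearMap.comp_zero]
  obtain ⟨v, hv⟩ := (hTexact u).mp h0
  refine ⟨v, ?_⟩
  have hsurj : Function.Surjective (q.baseChange R) := by
    have hcoe : (q.baseChange R : R ⊗[k] _ → R ⊗[k] M) = q.lTensor R :=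
      LinearMap.baseChange_eq_ltensor q
    rw [hcoe]
    exact LinearMap.lTensor_surjective R hq
  have hcomp : (LinearMap.tensorProduct k R M N v).comp (q.baseChange R)
      = f.comp (q.baseChange R) := by
    rw [← nu_naturality, hv, hu]
  apply LinearMap.ext; intro z
  obtain ⟨w, rfl⟩ := hsurj z
  exact DFunLike.congr_fun hcomp w

end Nu

/-! ### The two defect maps cutting out the centroid -/

section LieD
variable (k : Type*) [CommRing k] (g : Type*) [LieRing g] [LieAlgebra k g]

def LieAux.D1 : (g →ₗ[k] g) →ₗ[k] (g →ₗ[k] g →ₗ[k] g) where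
  toFun χ := LinearMap.mk₂ k (fun x y => χ ⁅x, y⁆ - ⁅χ x, y⁆)
    (fun x x' y => by simp only [add_lie, map_add]; abel)
    (fun c x y => by simp only [smul_lie, map_smul, smul_sub])
    (fun x y y' => by simp only [lie_add, map_add]; abel)
    (fun c x y => by simp only [lie_smul, map_smul, smul_sub])
  map_add' χ ψ := by
    refine LinearMap.ext fun x => LinearMap.ext fun y => ?_
    simp only [LinearMap.mk₂_apply, LinearMap.add_apply, add_lie]
    abel
  map_smul' c χ := by
    refine LinearMap.ext fun x => LinearMap.ext fun y => ?_
    simp only [LinearMap.mk₂_apply, LinearMap.smul_apply, RingHom.id_apply, smul_sub, smul_lie]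

def LieAux.D2 : (g →ₗ[k] g) →ₗ[k] (g →ₗ[k] g →ₗ[k] g) where
  toFun χ := LinearMap.mk₂ k (fun x y => χ ⁅x, y⁆ - ⁅x, χ y⁆)
    (fun x x' y => by simp only [add_lie, map_add]; abel)
    (fun c x y => by simp only [smul_lie, map_smul, smul_sub])
    (fun x y y' => by simp only [lie_add, map_add]; abel)
    (fun c x y => by simp only [lie_smul, map_smul, smul_sub])
  map_add' χ ψ := by
    refine LinearMap.ext fun x => LinearMap.ext fun y => ?_
    simp only [LinearMap.mk₂_apply, LinearMap.add_apply, lie_add]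
    abel
  map_smul' c χ := by
    refine LinearMap.ext fun x => LinearMap.ext fun y => ?_
    simp only [LinearMap.mk₂_apply, LinearMap.smul_apply, RingHom.id_apply, smul_sub, lie_smul]

open LieAux in
lemma LieAux.centroid_eq : lieCentroid k g = LinearMap.ker ((D1 k g).prod (D2 k g)) := by
  ext χ
  show (∀ x y : g, χ ⁅x, y⁆ = ⁅χ x, y⁆ ∧ χ ⁅x, y⁆ = ⁅x, χ y⁆) ↔ _
  rw [LinearMap.mem_ker, LinearMap.prod_apply, Function.prod, Prod.mk_eq_zero]
  have h1 : D1 k g χ = 0 ↔ ∀ x y : g, χ ⁅x, y⁆ = ⁅χ x, y⁆ := by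
    rw [LinearMap.ext_iff]
    constructor
    · intro h x y
      have := DFunLike.congr_fun (h x) y
      simpa [D1, sub_eq_zero] using this
    · intro h x
      refine LinearMap.ext fun y => ?_
      simpa [D1, sub_eq_zero] using h x y
  have h2 : D2 k g χ = 0 ↔ ∀ x y : g, χ ⁅x, y⁆ = ⁅x, χ y⁆ := by
    rw [LinearMap.ext_iff]
    constructor
    · intro h x y
      have := DFunLike.congr_fun (h x) y
      simpa [D2, sub_eq_zero] using this
    · intro h x
      refine LinearMap.ext fun y => ?_
      simpa [D2, sub_eq_zero] using h x y
  rw [h1, h2]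
  constructor
  · intro h; exact ⟨fun x y => (h x y).1, fun x y => (h x y).2⟩
  · intro h x y; exact ⟨h.1 x y, h.2 x y⟩

variable (R : Type*) [CommRing R] [Algebra k R]

open LieAux in
lemma LieAux.key1 (z : R ⊗[k] (g →ₗ[k] g)) (v w : R ⊗[k] g) :
    LinearMap.tensorProduct k R g g
        (LinearMap.tensorProduct k R g (g →ₗ[k] g) ((D1 k g).lTensor R z) v) w
      = (LinearMap.tensorProduct k R g g z) ⁅v, w⁆
        - ⁅(LinearMap.tensorProduct k R g g z) v, w⁆ := by
  induction z with
  | zero => simp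
  | tmul r χ =>
    induction v with
    | zero => simp
    | tmul s x =>
      induction w with
      | zero => simp
      | tmul t y =>
          rw [LinearMap.lTensor_tmul, nu_tmul, nu_tmul]
          simp only [LinearMap.smul_apply, LinearMap.baseChange_tmul, smul_tmul', smul_eq_mul,
            mul_one]
          rw [nu_tmul, LieAlgebra.ExtendScalars.bracket_tmul]
          simp only [LinearMap.smul_apply, LinearMap.baseChange_tmul, smul_tmul', smul_eq_mul,
            LieAlgebra.ExtendScalars.bracket_tmul, D1, LinearMap.coe_mk, AddHom.coe_mk,
            LinearMap.mk₂_apply, tmul_sub, smul_sub, mul_assoc]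
      | add w1 w2 h1 h2 =>
          simp only [map_add, LinearMap.add_apply, lie_add] at h1 h2 ⊢
          rw [h1, h2]; abel
    | add v1 v2 h1 h2 =>
        simp only [map_add, LinearMap.add_apply, add_lie, lie_add] at h1 h2 ⊢
        rw [h1, h2]; abel
  | add z1 z2 h1 h2 =>
      simp only [map_add, LinearMap.add_apply, add_lie, lie_add] at h1 h2 ⊢
      rw [h1, h2]; abel

open LieAux in
lemma LieAux.key2 (z : R ⊗[k] (g →ₗ[k] g)) (v w : R ⊗[k] g) :
    LinearMap.tensorProduct k R g g
        (LinearMap.tensorProduct k R g (g →ₗ[k] g) ((D2 k g).lTensor R z) v) w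
      = (LinearMap.tensorProduct k R g g z) ⁅v, w⁆
        - ⁅v, (LinearMap.tensorProduct k R g g z) w⁆ := by
  induction z with
  | zero => simp
  | tmul r χ =>
    induction v with
    | zero => simp
    | tmul s x =>
      induction w with
      | zero => simp
      | tmul t y =>
          rw [LinearMap.lTensor_tmul, nu_tmul, nu_tmul]
          simp only [LinearMap.smul_apply, LinearMap.baseChange_tmul, smul_tmul', smul_eq_mul,
            mul_one]
          rw [nu_tmul, LieAlgebra.ExtendScalars.bracket_tmul]
          simp only [LinearMap.smul_apply, LinearMap.baseChange_tmul, smul_tmul', smul_eq_mul,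
            LieAlgebra.ExtendScalars.bracket_tmul, D2, LinearMap.coe_mk, AddHom.coe_mk,
            LinearMap.mk₂_apply, tmul_sub, smul_sub, mul_assoc]
          ring_nf
      | add w1 w2 h1 h2 =>
          simp only [map_add, LinearMap.add_apply, lie_add] at h1 h2 ⊢
          rw [h1, h2]; abel
    | add v1 v2 h1 h2 =>
        simp only [map_add, LinearMap.add_apply, add_lie, lie_add] at h1 h2 ⊢
        rw [h1, h2]; abel
  | add z1 z2 h1 h2 =>
      simp only [map_add, LinearMap.add_apply, add_lie, lie_add] at h1 h2 ⊢
      rw [h1, h2]; abel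

end LieD

set_option maxHeartbeats 1000000 in
set_option synthInstance.maxHeartbeats 400000 in
open LieAux in
/-- Let `k` be a commutative ring, `g` a Lie algebra over `k` that is
finitely presented as a `k`-module, and `R` a flat commutative `k`-algebra.  The
canonical map `Ctd_k(g) ⊗_k R → Ctd_R(g ⊗_k R)`, sending `χ ⊗ r` to the endomorphism
`r • (χ ⊗ id_R)` of the base change, is bijective; i.e. the induced map
`Ctd_k(g) ⊗_k R → End_R (R ⊗_k g)` is injective with image exactly the `R`-centroid
of the base-changed Lie algebra `R ⊗[k] g`. -/
theorem lieCentroid_baseChange_bijective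
    (k : Type*) [CommRing k] (g : Type*) [LieRing g] [LieAlgebra k g]
    (R : Type*) [CommRing R] [Algebra k R]
    [Module.FinitePresentation k g] [Module.Flat k R]
    -- the canonical map `Ctd_k(g) ⊗_k R → End_R(R ⊗_k g)`, `χ ⊗ r ↦ r • baseChange χ`
    (Φ : R ⊗[k] (lieCentroid k g) →ₗ[k] ((R ⊗[k] g) →ₗ[R] (R ⊗[k] g)))
    (hΦ : ∀ (r : R) (χ : lieCentroid k g),
      Φ (r ⊗ₜ[k] χ) = r • LinearMap.baseChange R (χ : g →ₗ[k] g)) :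
    Function.Injective Φ ∧
      ∀ f : (R ⊗[k] g) →ₗ[R] (R ⊗[k] g),
        (∃ z, Φ z = f) ↔ ∀ x y : R ⊗[k] g, f ⁅x, y⁆ = ⁅f x, y⁆ ∧ f ⁅x, y⁆ = ⁅x, f y⁆ := by
  classical
  set ι := (lieCentroid k g).subtype with hι
  have hΦcomp : ∀ z, Φ z = LinearMap.tensorProduct k R g g (ι.lTensor R z) := by
    intro z
    induction z with
    | zero => simp
    | tmul r χ => rw [hΦ, LinearMap.lTensor_tmul, nu_tmul]; rfl
    | add a b ha hb => rw [map_add, ha, hb, map_add, map_add]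
  have hnuinj : Function.Injective (LinearMap.tensorProduct k R g g) := nu_injective k R g g
  have hιinj : Function.Injective (ι.lTensor R) :=
    Module.Flat.lTensor_preserves_injective_linearMap _ (Submodule.injective_subtype _)
  have hinj : Function.Injective Φ := by
    intro a b hab
    rw [hΦcomp, hΦcomp] at hab
    exact hιinj (hnuinj hab)
  refine ⟨hinj, fun f => ⟨?_, ?_⟩⟩
  · rintro ⟨z, rfl⟩
    intro v w
    have hD10 : (D1 k g) ∘ₗ ι = 0 := by
      refine LinearMap.ext fun χ => LinearMap.ext fun x => LinearMap.ext fun y => ?_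
      simp only [LinearMap.coe_comp, Function.comp_apply, hι, Submodule.coe_subtype,
        D1, LinearMap.coe_mk, AddHom.coe_mk, LinearMap.mk₂_apply, LinearMap.zero_apply,
        sub_eq_zero]
      exact (χ.2 x y).1
    have hD20 : (D2 k g) ∘ₗ ι = 0 := by
      refine LinearMap.ext fun χ => LinearMap.ext fun x => LinearMap.ext fun y => ?_
      simp only [LinearMap.coe_comp, Function.comp_apply, hι, Submodule.coe_subtype,
        D2, LinearMap.coe_mk, AddHom.coe_mk, LinearMap.mk₂_apply, LinearMap.zero_apply,
        sub_eq_zero]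
      exact (χ.2 x y).2
    have hz1 : (D1 k g).lTensor R (ι.lTensor R z) = 0 := by
      rw [← LinearMap.lTensor_comp_apply, hD10, LinearMap.lTensor_zero, LinearMap.zero_apply]
    have hz2 : (D2 k g).lTensor R (ι.lTensor R z) = 0 := by
      rw [← LinearMap.lTensor_comp_apply, hD20, LinearMap.lTensor_zero, LinearMap.zero_apply]
    have hk1 := key1 k g R (ι.lTensor R z) v w
    have hk2 := key2 k g R (ι.lTensor R z) v w
    rw [hz1, map_zero, LinearMap.zero_apply, map_zero, LinearMap.zero_apply] at hk1
    rw [hz2, map_zero, LinearMap.zero_apply, map_zero, LinearMap.zero_apply] at hk2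
    rw [← hΦcomp z] at hk1 hk2
    exact ⟨sub_eq_zero.mp hk1.symm, sub_eq_zero.mp hk2.symm⟩
  · intro hf
    obtain ⟨z₀, hz₀⟩ := nu_surjective k R g g f
    have hD1z : (D1 k g).lTensor R z₀ = 0 := by
      apply nu_injective k R g (g →ₗ[k] g)
      rw [map_zero]
      refine LinearMap.ext fun v => ?_
      rw [LinearMap.zero_apply]
      apply nu_injective k R g g
      rw [map_zero]
      refine LinearMap.ext fun w => ?_
      rw [LinearMap.zero_apply, key1, hz₀, sub_eq_zero]
      exact (hf v w).1
    have hD2z : (D2 k g).lTensor R z₀ = 0 := by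
      apply nu_injective k R g (g →ₗ[k] g)
      rw [map_zero]
      refine LinearMap.ext fun v => ?_
      rw [LinearMap.zero_apply]
      apply nu_injective k R g g
      rw [map_zero]
      refine LinearMap.ext fun w => ?_
      rw [LinearMap.zero_apply, key2, hz₀, sub_eq_zero]
      exact (hf v w).2
    have hpr : ∀ z : R ⊗[k] (g →ₗ[k] g),
        TensorProduct.prodRight k k R _ _ (((D1 k g).prod (D2 k g)).lTensor R z)
          = ((D1 k g).lTensor R z, (D2 k g).lTensor R z) := by
      intro z
      induction z with
      | zero => simp; rfl
      | tmul r χ => simp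
      | add a b ha hb => rw [map_add, map_add, map_add, map_add, ha, hb, Prod.mk_add_mk]
    have hDz : ((D1 k g).prod (D2 k g)).lTensor R z₀ = 0 := by
      have h := hpr z₀
      rw [hD1z, hD2z] at h
      have h0 : TensorProduct.prodRight k k R _ _ (((D1 k g).prod (D2 k g)).lTensor R z₀) = 0 := by
        rw [h]; rfl
      exact (LinearEquiv.map_eq_zero_iff _).mp h0
    have hex := Module.Flat.lTensor_exact (M := R)
      (LinearMap.exact_subtype_ker_map ((D1 k g).prod (D2 k g)))
    obtain ⟨w₀, hw₀⟩ := (hex z₀).mp hDz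
    let E : (lieCentroid k g) ≃ₗ[k] (LinearMap.ker ((D1 k g).prod (D2 k g))) :=
      LinearEquiv.ofEq _ _ (centroid_eq k g)
    refine ⟨E.symm.toLinearMap.lTensor R w₀, ?_⟩
    rw [hΦcomp, ← LinearMap.lTensor_comp_apply]
    have hcs : ι ∘ₗ E.symm.toLinearMap
        = (LinearMap.ker ((D1 k g).prod (D2 k g))).subtype :=
      LinearMap.ext fun x => rfl
    rw [hcs, hw₀, hz₀]
end

section
/- Let k be a field, g a finite-dimensional Lie algebra over k which is perfect (g = [g,g]) and central over k (every k-linear endomorphism χ of g with χ([x,y]) = [χ(x),y] = [x,χ(y)] for all x, y equals multiplication by a unique scalar in k). Let R be a commutative k-algebra, R' a commutative R-algebra that is faithfully flat as an R-module, and L a Lie algebra over R such that there is an isomorphism of Lie algebras over R' between L ⊗_R R' and g ⊗_k R'. Then L is faithful and finitely presented as an R-module. -/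
open TensorProduct

section Descent

variable (R : Type*) {M : Type*} [CommRing R] (R' : Type*) [CommRing R'] [Algebra R R']
  [Module.FaithfullyFlat R R'] [AddCommGroup M] [Module R M]

/-- Finiteness descends along a faithfully flat algebra. -/
theorem Module.Finite.of_faithfullyFlat_baseChange
    (h : Module.Finite R' (R' ⊗[R] M)) : Module.Finite R M := by
  classical
  obtain ⟨S, hS⟩ := h.fg_top
  choose sf hsf using fun t : R' ⊗[R] M => TensorProduct.exists_finset t
  set s : Finset M := S.attach.biUnion (fun t => (sf t.1).image Prod.snd) with hs
  set N : Submodule R M := Submodule.span R (s : Set M) with hN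
  suffices hNT : N = ⊤ by
    have hfg : (⊤ : Submodule R M).FG := ⟨s, by rw [← hN]; exact hNT⟩
    exact ⟨hfg⟩
  set q := N.mkQ with hq
  have hvanish : ∀ t ∈ S, (q.baseChange R') t = 0 := by
    intro t ht
    rw [hsf t, map_sum]
    refine Finset.sum_eq_zero fun p hp => ?_
    have hmem : p.2 ∈ N := Submodule.subset_span (Finset.mem_coe.2
      (Finset.mem_biUnion.2 ⟨⟨t, ht⟩, Finset.mem_attach _ _, Finset.mem_image_of_mem _ hp⟩))
    have hz : q p.2 = 0 := (Submodule.Quotient.mk_eq_zero N).2 hmem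
    simp [hz]
  have hf0 : (q.baseChange R') = 0 := by
    apply LinearMap.ker_eq_top.1
    rw [← top_le_iff, ← hS, Submodule.span_le]
    intro t ht
    exact LinearMap.mem_ker.2 (hvanish t ht)
  have hsurj : Function.Surjective (q.baseChange R') := by
    rw [LinearMap.baseChange_eq_ltensor]
    exact LinearMap.lTensor_surjective R' (Submodule.mkQ_surjective N)
  have hsub : Subsingleton (R' ⊗[R] (M ⧸ N)) := by
    constructor
    intro a b
    obtain ⟨a, rfl⟩ := hsurj a
    obtain ⟨b, rfl⟩ := hsurj b
    rw [hf0]; simp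
  have : Subsingleton (M ⧸ N) :=
    Module.FaithfullyFlat.lTensor_reflects_triviality R R' (M ⧸ N)
  exact Submodule.Quotient.subsingleton_iff.1 this

/-- Finite presentation descends along a faithfully flat algebra. -/
theorem Module.FinitePresentation.of_faithfullyFlat_baseChange
    (h : Module.FinitePresentation R' (R' ⊗[R] M)) : Module.FinitePresentation R M := by
  classical
  have hMfin : Module.Finite R M :=
    Module.Finite.of_faithfullyFlat_baseChange R R' inferInstance
  obtain ⟨n, f, hf⟩ := Module.Finite.exists_fin' R M
  set K := LinearMap.ker f with hK
  -- the base-changed surjection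
  have hfbc : Function.Surjective (f.baseChange R') := by
    rw [LinearMap.baseChange_eq_ltensor]
    exact LinearMap.lTensor_surjective R' hf
  have hkerfg : (LinearMap.ker (f.baseChange R')).FG :=
    Module.FinitePresentation.fg_ker (f.baseChange R') hfbc
  -- identify R' ⊗ K with the kernel of the base-changed map
  set j := (K.subtype).baseChange R' with hj
  have hjinj : Function.Injective j := by
    rw [hj, LinearMap.baseChange_eq_ltensor]
    exact Module.Flat.lTensor_preserves_injective_linearMap K.subtype
      (Submodule.injective_subtype K)
  have hexact : Function.Exact j (f.baseChange R') := by
    have h1 : Function.Exact K.subtype f := LinearMap.exact_subtype_ker_map f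
    have h2 := Module.Flat.lTensor_exact R' h1
    intro x
    rw [hj]
    constructor
    · intro hx
      obtain ⟨y, hy⟩ := (h2 x).1 (by
        rw [← LinearMap.baseChange_eq_ltensor]; exact hx)
      exact ⟨y, by rw [LinearMap.baseChange_eq_ltensor]; exact hy⟩
    · rintro ⟨y, rfl⟩
      rw [LinearMap.baseChange_eq_ltensor]
      exact (h2 _).2 ⟨y, rfl⟩
  have hrange : LinearMap.range j = LinearMap.ker (f.baseChange R') :=
    (LinearMap.exact_iff.1 hexact).symm
  -- so R' ⊗ K is a finite R'-module
  have hKbcfin : Module.Finite R' (R' ⊗[R] K) := by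
    have : Module.Finite R' (LinearMap.range j) := by
      rw [hrange]
      exact Module.Finite.iff_fg.2 hkerfg
    exact Module.Finite.equiv (LinearEquiv.ofInjective j hjinj).symm
  have hKfin : Module.Finite R K :=
    Module.Finite.of_faithfullyFlat_baseChange R R' hKbcfin
  have hKfg : K.FG := Module.Finite.iff_fg.1 hKfin
  exact Module.finitePresentation_of_free_of_surjective f hf hKfg

end Descent

/-- Let `k` be a field and `g` a finite-dimensional Lie algebra over
`k` which is perfect and central.  Let `R` be a commutative `k`-algebra, `R'` a
faithfully flat commutative `R`-algebra, and `L` a Lie algebra over `R` whose base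
change `R' ⊗[R] L` is isomorphic, as a Lie algebra over `R'`, to `R' ⊗[k] g`.  Then
`L` is faithful and finitely presented as an `R`-module. -/
theorem twistedForm_faithful_finitePresentation
    (k : Type*) [Field k] (g : Type*) [LieRing g] [LieAlgebra k g]
    [FiniteDimensional k g]
    (hgperf : ⁅(⊤ : LieIdeal k g), (⊤ : LieIdeal k g)⁆ = ⊤)
    (hgcentral : ∀ χ : g →ₗ[k] g,
      (∀ x y : g, χ ⁅x, y⁆ = ⁅χ x, y⁆ ∧ χ ⁅x, y⁆ = ⁅x, χ y⁆) →
      ∃! c : k, ∀ x : g, χ x = c • x)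
    (R : Type*) [CommRing R] [Algebra k R]
    (R' : Type*) [CommRing R'] [Algebra R R'] [Module.FaithfullyFlat R R']
    [Algebra k R'] [IsScalarTower k R R']
    (L : Type*) [LieRing L] [LieAlgebra R L]
    (e : Nonempty ((R' ⊗[R] L) ≃ₗ⁅R'⁆ (R' ⊗[k] g))) :
    (∀ r : R, (∀ x : L, r • x = 0) → r = 0) ∧ Module.FinitePresentation R L := by
  classical
  obtain ⟨e⟩ := e
  constructor
  · -- faithfulness
    intro r hr
    -- `g` is nontrivial
    have hgne : ∃ x₀ : g, x₀ ≠ 0 := by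
      by_contra hg
      push_neg at hg
      obtain ⟨c, -, hu⟩ := hgcentral 0 (fun x y => by simp)
      have h0 : (0 : k) = c := hu 0 (fun x => by simp)
      have h1 : (1 : k) = c := hu 1 (fun x => by rw [hg x]; simp)
      exact one_ne_zero (h1.trans h0.symm)
    obtain ⟨x₀, hx₀⟩ := hgne
    have : Nontrivial g := nontrivial_of_ne x₀ 0 hx₀
    set a := algebraMap R R' r with ha
    -- `a` annihilates `R' ⊗[R] L`
    have key : ∀ z : R' ⊗[R] L, a • z = 0 := by
      intro z
      induction z using TensorProduct.induction_on with
      | zero => simp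
      | tmul x m =>
          calc a • (x ⊗ₜ[R] m) = (a * x) ⊗ₜ[R] m := by
                rw [smul_tmul']; rfl
            _ = (r • x) ⊗ₜ[R] m := by rw [Algebra.smul_def]
            _ = x ⊗ₜ[R] (r • m) := smul_tmul r x m
            _ = 0 := by rw [hr m, tmul_zero]
      | add x y hx hy => rw [smul_add, hx, hy, add_zero]
    -- hence `a` annihilates `R' ⊗[k] g`
    have key' : ∀ w : R' ⊗[k] g, a • w = 0 := by
      intro w
      have h1 : e.toLinearEquiv (a • (e.symm w)) = e.toLinearEquiv 0 := by rw [key]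
      rw [map_smul, map_zero] at h1
      simpa using h1
    -- use a basis of `g` to conclude `a = 0`
    let b := Module.Free.chooseBasis k g
    let B := Algebra.TensorProduct.basis R' b
    obtain ⟨i⟩ := b.index_nonempty
    have hBi : a • B i = 0 := key' _
    have ha0 : a = 0 := by
      have := congrArg (fun w => B.repr w i) hBi
      simpa [Module.Basis.repr_self] using this
    -- descend `a = 0` to `r = 0` by faithful flatness
    have hz : LinearMap.lTensor R' (LinearMap.lsmul R R r) = 0 := by
      apply TensorProduct.ext'
      intro x s
      show x ⊗ₜ[R] (r • s) = 0
      rw [tmul_smul, smul_tmul', Algebra.smul_def, ← ha, ha0, zero_mul, zero_tmul]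
    have hls : LinearMap.lsmul R R r = 0 :=
      (Module.FaithfullyFlat.zero_iff_lTensor_zero R R' (LinearMap.lsmul R R r)).2 hz
    simpa using LinearMap.congr_fun hls 1
  · -- finite presentation
    have h1 : Module.FinitePresentation R' (R' ⊗[k] g) :=
      Module.finitePresentation_of_projective R' (R' ⊗[k] g)
    have h2 : Module.FinitePresentation R' (R' ⊗[R] L) :=
      Module.finitePresentation_of_surjective e.symm.toLinearEquiv.toLinearMap
        e.symm.toLinearEquiv.surjective
        (by rw [LinearEquiv.ker]; exact Submodule.fg_bot)
    exact Module.FinitePresentation.of_faithfullyFlat_baseChange R R' h2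
end

section
/- Let k be a field, g a finite-dimensional Lie algebra over k which is perfect (g = [g,g]) and central over k (every k-linear endomorphism χ of g with χ([x,y]) = [χ(x),y] = [x,χ(y)] for all x, y equals multiplication by a unique scalar in k). Let R be a commutative k-algebra, R' a commutative R-algebra that is faithfully flat as an R-module, and L a Lie algebra over R such that there is an isomorphism of Lie algebras over R' between L ⊗_R R' and g ⊗_k R'. Then the canonical map R → Ctd_k(L) is an isomorphism: every k-linear endomorphism χ of L satisfying χ([x,y]) = [χ(x),y] = [x,χ(y)] for all x, y ∈ L is of the form x ↦ r • x for a unique r ∈ R. -/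
open TensorProduct

/-- Over a faithfully flat algebra, `m ↦ 1 ⊗ m` kills only zero. -/
lemma one_tmul_eq_zero_of_faithfullyFlat {R : Type*} [CommRing R] {R' : Type*} [CommRing R']
    [Algebra R R'] [Module.FaithfullyFlat R R'] {M : Type*} [AddCommGroup M] [Module R M]
    {m : M} (h : (1 : R') ⊗ₜ[R] m = 0) : m = 0 := by
  have hz : LinearMap.lTensor R' (LinearMap.toSpanSingleton R M m) = 0 := by
    apply TensorProduct.ext'
    intro a r
    have h1 : (LinearMap.lTensor R' (LinearMap.toSpanSingleton R M m)) (a ⊗ₜ r)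
        = a ⊗ₜ (r • m) := rfl
    have h2 : a ⊗ₜ[R] m = a • ((1:R') ⊗ₜ[R] m) := by
      rw [smul_tmul', smul_eq_mul, mul_one]
    rw [LinearMap.zero_apply, h1, tmul_smul, h2, h, smul_zero, smul_zero]
  have hf := (Module.FaithfullyFlat.zero_iff_lTensor_zero R R'
    (LinearMap.toSpanSingleton R M m)).mpr hz
  simpa using congrFun (congrArg DFunLike.coe hf) 1

set_option maxHeartbeats 2000000 in
/-- Let `k` be a field and `g` a finite-dimensional Lie algebra over
`k` which is perfect and central.  Let `R` be a commutative `k`-algebra, `R'` a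
faithfully flat commutative `R`-algebra, and `L` a Lie algebra over `R` whose base
change `R' ⊗[R] L` is isomorphic, as a Lie algebra over `R'`, to `R' ⊗[k] g`.  Then
the canonical map `R → Ctd_k(L)` is an isomorphism: every `k`-linear endomorphism of
`L` lying in the centroid is the homothety by a unique `r ∈ R`. -/
theorem twistedForm_centroid_eq_base
    (k : Type*) [Field k] (g : Type*) [LieRing g] [LieAlgebra k g]
    [FiniteDimensional k g]
    (hgperf : ⁅(⊤ : LieIdeal k g), (⊤ : LieIdeal k g)⁆ = ⊤)
    (hgcentral : ∀ χ : g →ₗ[k] g,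
      (∀ x y : g, χ ⁅x, y⁆ = ⁅χ x, y⁆ ∧ χ ⁅x, y⁆ = ⁅x, χ y⁆) →
      ∃! c : k, ∀ x : g, χ x = c • x)
    (R : Type*) [CommRing R] [Algebra k R]
    (R' : Type*) [CommRing R'] [Algebra R R'] [Module.FaithfullyFlat R R']
    [Algebra k R'] [IsScalarTower k R R']
    (L : Type*) [LieRing L] [LieAlgebra R L] [LieAlgebra k L] [IsScalarTower k R L]
    (e : Nonempty ((R' ⊗[R] L) ≃ₗ⁅R'⁆ (R' ⊗[k] g))) :
    ∀ χ : L →ₗ[k] L,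
      (∀ x y : L, χ ⁅x, y⁆ = ⁅χ x, y⁆ ∧ χ ⁅x, y⁆ = ⁅x, χ y⁆) →
      ∃! r : R, ∀ x : L, χ x = r • x := by
  classical
  obtain ⟨E⟩ := e
  intro χ hχ
  -- `g` is nontrivial
  have hgnt : Nontrivial g := by
    by_contra hns
    rw [not_nontrivial_iff_subsingleton] at hns
    obtain ⟨c, -, hu⟩ := hgcentral 0 (by intro x y; simp [Subsingleton.elim (⁅x,y⁆:g) 0])
    have h0 : (0 : k) = c := hu 0 (fun x => Subsingleton.elim _ _)
    have h1 : (1 : k) = c := hu 1 (fun x => Subsingleton.elim _ _)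
    exact one_ne_zero (h1.trans h0.symm)
  let b := Module.Basis.ofVectorSpace k g
  haveI hι : Nonempty (Module.Basis.ofVectorSpaceIndex k g) := b.index_nonempty
  let B := b.baseChange R'
  let F := E.toLinearEquiv
  -- perfectness of `g` as a linear span
  have hgspan : Submodule.span k
      {m : g | ∃ x ∈ (⊤ : LieIdeal k g), ∃ n ∈ (⊤ : LieIdeal k g), ⁅x, n⁆ = m} = ⊤ := by
    have h : (LieSubmodule.toSubmodule (⁅(⊤ : LieIdeal k g), (⊤ : LieIdeal k g)⁆ : LieIdeal k g))
        = LieSubmodule.toSubmodule (⊤ : LieIdeal k g) := by rw [hgperf]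
    rw [LieSubmodule.lieIdeal_oper_eq_linear_span'] at h
    simpa using h
  -- perfectness of `R' ⊗ g`
  have hperf' : ∀ w : R' ⊗[k] g,
      w ∈ Submodule.span R' {m : R' ⊗[k] g | ∃ u v : R' ⊗[k] g, ⁅u, v⁆ = m} := by
    intro w
    induction w using TensorProduct.induction_on with
    | zero => exact Submodule.zero_mem _
    | add u v hu hv => exact Submodule.add_mem _ hu hv
    | tmul a x =>
      have hx : x ∈ Submodule.span k
          {m : g | ∃ x ∈ (⊤ : LieIdeal k g), ∃ n ∈ (⊤ : LieIdeal k g), ⁅x, n⁆ = m} :=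
        hgspan ▸ Submodule.mem_top
      induction hx using Submodule.span_induction with
      | mem m hm =>
        obtain ⟨x, -, y, -, rfl⟩ := hm
        apply Submodule.subset_span
        exact ⟨a ⊗ₜ x, (1:R') ⊗ₜ y, by rw [LieAlgebra.ExtendScalars.bracket_tmul, mul_one]⟩
      | zero => simp
      | add x y hx hy hpx hpy => rw [tmul_add]; exact Submodule.add_mem _ hpx hpy
      | smul c x hx hpx =>
        have : a ⊗ₜ[k] (c • x) = (algebraMap k R' c) • (a ⊗ₜ[k] x) := by
          rw [tmul_smul, algebraMap_smul]
        rw [this]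
        exact Submodule.smul_mem _ _ hpx
  -- the linear span of brackets in `L`
  set N : Submodule R L := Submodule.span R {m : L | ∃ x y : L, ⁅x, y⁆ = m} with hNdef
  -- brackets in `R' ⊗ L` lie in the range of the base change of the inclusion of `N`
  have hbr : ∀ u v : R' ⊗[R] L,
      ⁅u, v⁆ ∈ LinearMap.range (LinearMap.baseChange R' N.subtype) := by
    intro u v
    induction u using TensorProduct.induction_on with
    | zero => rw [zero_lie]; exact Submodule.zero_mem _
    | add u1 u2 h1 h2 => rw [add_lie]; exact Submodule.add_mem _ h1 h2
    | tmul a x =>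
      induction v using TensorProduct.induction_on with
      | zero => rw [lie_zero]; exact Submodule.zero_mem _
      | add v1 v2 h1 h2 => rw [lie_add]; exact Submodule.add_mem _ h1 h2
      | tmul c y =>
        refine ⟨(a*c) ⊗ₜ ⟨⁅x,y⁆, Submodule.subset_span ⟨x,y,rfl⟩⟩, ?_⟩
        rw [LinearMap.baseChange_tmul, LieAlgebra.ExtendScalars.bracket_tmul]
        rfl
  -- every element of `R' ⊗ L` is in the span of brackets
  have hkey : ∀ w : R' ⊗[R] L,
      w ∈ Submodule.span R' {m : R' ⊗[R] L | ∃ u v : R' ⊗[R] L, ⁅u, v⁆ = m} := by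
    intro w
    have h2 : Submodule.map (F.symm.toLinearMap)
        (Submodule.span R' {m : R' ⊗[k] g | ∃ u v : R' ⊗[k] g, ⁅u, v⁆ = m})
        ≤ Submodule.span R' {m : R' ⊗[R] L | ∃ u v : R' ⊗[R] L, ⁅u, v⁆ = m} := by
      rw [Submodule.map_span]
      apply Submodule.span_mono
      rintro _ ⟨m, ⟨u, v, rfl⟩, rfl⟩
      exact ⟨E.symm u, E.symm v, (E.symm.map_lie u v).symm⟩
    have h3 := h2 (Submodule.mem_map_of_mem (hperf' (F w)))
    rw [show F.symm.toLinearMap (F w) = w from F.symm_apply_apply w] at h3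
    exact h3
  have hsurj : ∀ w : R' ⊗[R] L, w ∈ LinearMap.range (LinearMap.baseChange R' N.subtype) := by
    intro w
    refine Submodule.span_le.2 ?_ (hkey w)
    rintro _ ⟨u, v, rfl⟩
    exact hbr u v
  -- N = ⊤ by faithful flatness
  have hNtop : N = ⊤ := by
    haveI hss : Subsingleton (R' ⊗[R] (L ⧸ N)) := by
      refine subsingleton_of_forall_eq 0 fun z => ?_
      have hz : ∀ z : R' ⊗[R] (L ⧸ N), ∃ u : R' ⊗[R] L, LinearMap.baseChange R' N.mkQ u = z := by
        intro z
        induction z using TensorProduct.induction_on with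
        | zero => exact ⟨0, map_zero _⟩
        | add z1 z2 h1 h2 =>
          obtain ⟨u1, hu1⟩ := h1; obtain ⟨u2, hu2⟩ := h2
          exact ⟨u1 + u2, by rw [map_add, hu1, hu2]⟩
        | tmul c q =>
          obtain ⟨x, rfl⟩ := N.mkQ_surjective q
          exact ⟨c ⊗ₜ x, rfl⟩
      obtain ⟨u, hu⟩ := hz z
      obtain ⟨v, rfl⟩ := hsurj u
      rw [← hu, ← LinearMap.comp_apply, ← LinearMap.baseChange_comp]
      have : (N.mkQ ∘ₗ N.subtype) = 0 := by
        ext n; simp [Submodule.Quotient.mk_eq_zero]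
      rw [this]
      simp
    haveI := Module.FaithfullyFlat.lTensor_reflects_triviality R R' (L ⧸ N)
    exact Submodule.Quotient.subsingleton_iff.mp inferInstance
  -- χ is R-linear
  have hRlin : ∀ (r : R) (x : L), χ (r • x) = r • χ x := by
    have key : ∀ x ∈ N, ∀ r : R, χ (r • x) = r • χ x := by
      intro x hx
      induction hx using Submodule.span_induction with
      | mem m hm =>
        obtain ⟨x, y, rfl⟩ := hm
        intro r
        rw [← smul_lie, (hχ (r • x) y).2, smul_lie, ← (hχ x y).2]
      | zero => intro r; simp
      | add x y hx hy hpx hpy => intro r; rw [smul_add, map_add, map_add, smul_add, hpx, hpy]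
      | smul s x hx hpx =>
        intro r
        rw [smul_smul, hpx (r * s), mul_comm r s, ← smul_smul, hpx s]
        exact smul_comm s r (χ x)
    intro r x
    exact key x (hNtop ▸ Submodule.mem_top) r
  let χR : L →ₗ[R] L :=
    { toFun := χ, map_add' := fun x y => χ.map_add x y, map_smul' := fun r x => hRlin r x }
  let χb := LinearMap.baseChange R' χR
  -- base change of χ is centroidal
  have hχb₁ : ∀ u v : R' ⊗[R] L, χb ⁅u, v⁆ = ⁅χb u, v⁆ := by
    intro u v
    induction u using TensorProduct.induction_on with
    | zero => simp
    | add u1 u2 h1 h2 => rw [add_lie, map_add, map_add, add_lie, h1, h2]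
    | tmul a x =>
      induction v using TensorProduct.induction_on with
      | zero => simp
      | add v1 v2 h1 h2 => rw [lie_add, map_add, h1, h2, ← lie_add]
      | tmul c y =>
        rw [LieAlgebra.ExtendScalars.bracket_tmul, LinearMap.baseChange_tmul,
          LinearMap.baseChange_tmul, LieAlgebra.ExtendScalars.bracket_tmul]
        show (a*c) ⊗ₜ[R] (χ ⁅x, y⁆) = (a*c) ⊗ₜ[R] ⁅χ x, y⁆
        rw [(hχ x y).1]
  have hχb₂ : ∀ u v : R' ⊗[R] L, χb ⁅u, v⁆ = ⁅u, χb v⁆ := by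
    intro u v
    induction v using TensorProduct.induction_on with
    | zero => simp
    | add v1 v2 h1 h2 => rw [lie_add, map_add, map_add, lie_add, h1, h2]
    | tmul c y =>
      induction u using TensorProduct.induction_on with
      | zero => simp
      | add u1 u2 h1 h2 => rw [add_lie, map_add, h1, h2, ← add_lie]
      | tmul a x =>
        rw [LieAlgebra.ExtendScalars.bracket_tmul, LinearMap.baseChange_tmul,
          LinearMap.baseChange_tmul, LieAlgebra.ExtendScalars.bracket_tmul]
        show (a*c) ⊗ₜ[R] (χ ⁅x, y⁆) = (a*c) ⊗ₜ[R] ⁅x, χ y⁆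
        rw [(hχ x y).2]
  -- conjugate to an endomorphism of `R' ⊗ g`
  let χ'' : (R' ⊗[k] g) →ₗ[R'] (R' ⊗[k] g) := F.toLinearMap ∘ₗ χb ∘ₗ F.symm.toLinearMap
  have hχ''app : ∀ u : R' ⊗[k] g, χ'' u = E (χb (E.symm u)) := fun u => rfl
  have hχ''₁ : ∀ u v : R' ⊗[k] g, χ'' ⁅u, v⁆ = ⁅χ'' u, v⁆ := by
    intro u v
    rw [hχ''app, hχ''app, E.symm.map_lie, hχb₁, E.map_lie, E.apply_symm_apply]
  have hχ''₂ : ∀ u v : R' ⊗[k] g, χ'' ⁅u, v⁆ = ⁅u, χ'' v⁆ := by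
    intro u v
    rw [hχ''app, hχ''app, E.symm.map_lie, hχb₂, E.map_lie, E.apply_symm_apply]
  -- extract the scalar: every dual functional gives a centroidal endomorphism of g
  have hkeylam : ∀ lam : Module.Dual k R', ∃ c : k, ∀ i j,
      lam (B.repr (χ'' (B j)) i) = c * (if j = i then 1 else 0) := by
    intro lam
    let φ : (R' ⊗[k] g) →ₗ[k] g :=
      (TensorProduct.lid k g).toLinearMap ∘ₗ (TensorProduct.map lam LinearMap.id)
    have hφ : ∀ (c : R') (x : g), φ (c ⊗ₜ[k] x) = lam c • x := by
      intro c x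
      simp [φ, TensorProduct.lid_tmul]
    have hφlie₁ : ∀ (u : R' ⊗[k] g) (y : g), φ ⁅u, (1:R') ⊗ₜ[k] y⁆ = ⁅φ u, y⁆ := by
      intro u y
      induction u using TensorProduct.induction_on with
      | zero => simp
      | add u1 u2 h1 h2 => rw [add_lie, map_add, h1, h2, map_add, add_lie]
      | tmul c x =>
        rw [LieAlgebra.ExtendScalars.bracket_tmul, mul_one, hφ, hφ, smul_lie]
    have hφlie₂ : ∀ (u : R' ⊗[k] g) (y : g), φ ⁅(1:R') ⊗ₜ[k] y, u⁆ = ⁅y, φ u⁆ := by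
      intro u y
      induction u using TensorProduct.induction_on with
      | zero => simp
      | add u1 u2 h1 h2 => rw [lie_add, map_add, h1, h2, map_add, lie_add]
      | tmul c x =>
        rw [LieAlgebra.ExtendScalars.bracket_tmul, one_mul, hφ, hφ, lie_smul]
    let χlam : g →ₗ[k] g := φ ∘ₗ (χ''.restrictScalars k) ∘ₗ ((TensorProduct.mk k R' g) 1)
    have hχlamapp : ∀ x : g, χlam x = φ (χ'' ((1:R') ⊗ₜ[k] x)) := fun x => rfl
    have hcent : ∀ x y : g, χlam ⁅x, y⁆ = ⁅χlam x, y⁆ ∧ χlam ⁅x, y⁆ = ⁅x, χlam y⁆ := by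
      intro x y
      have hbr1 : ((1:R') ⊗ₜ[k] ⁅x, y⁆ : R' ⊗[k] g) = ⁅(1:R') ⊗ₜ[k] x, (1:R') ⊗ₜ[k] y⁆ := by
        rw [LieAlgebra.ExtendScalars.bracket_tmul, one_mul]
      constructor
      · rw [hχlamapp, hbr1, hχ''₁, hφlie₁, ← hχlamapp]
      · rw [hχlamapp, hbr1, hχ''₂, hφlie₂, ← hχlamapp]
    obtain ⟨c, hc, -⟩ := hgcentral χlam hcent
    refine ⟨c, fun i j => ?_⟩
    have hrepr : ∀ (u : R' ⊗[k] g) (i), b.repr (φ u) i = lam (B.repr u i) := by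
      intro u i
      induction u using TensorProduct.induction_on with
      | zero => simp
      | add u1 u2 h1 h2 => simp [map_add, Finsupp.add_apply, h1, h2]
      | tmul c x =>
        rw [hφ, map_smul, Finsupp.smul_apply, smul_eq_mul]
        have hB : B.repr (c ⊗ₜ[k] x) i = b.repr x i • c := Module.Basis.baseChange_repr_tmul R' b c x i
        rw [hB, map_smul, smul_eq_mul, mul_comm]
    have h1 : B j = (1:R') ⊗ₜ[k] (b j) := Module.Basis.baseChange_apply R' b j
    rw [← hrepr, h1, ← hχlamapp, hc (b j), map_smul, Finsupp.smul_apply, Module.Basis.repr_self,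
      smul_eq_mul, Finsupp.single_apply]
  let i₀ : Module.Basis.ofVectorSpaceIndex k g := Classical.arbitrary _
  set a : R' := B.repr (χ'' (B i₀)) i₀ with ha
  have hM : ∀ i j, B.repr (χ'' (B j)) i = if j = i then a else 0 := by
    intro i j
    by_cases hij : j = i
    · subst hij
      simp only [if_pos rfl]
      have hz : ∀ lam : Module.Dual k R', lam (B.repr (χ'' (B j)) j - a) = 0 := by
        intro lam
        obtain ⟨c, hcc⟩ := hkeylam lam
        rw [map_sub, ha, hcc j j, hcc i₀ i₀, if_pos rfl, if_pos rfl, sub_self]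
      have := (Module.forall_dual_apply_eq_zero_iff k _).1 hz
      exact sub_eq_zero.mp this
    · simp only [if_neg hij]
      apply (Module.forall_dual_apply_eq_zero_iff k _).1
      intro lam
      obtain ⟨c, hcc⟩ := hkeylam lam
      rw [hcc i j, if_neg hij, mul_zero]
  have hscal : ∀ u : R' ⊗[k] g, χ'' u = a • u := by
    have hbasis : ∀ j, χ'' (B j) = a • B j := by
      intro j
      apply B.repr.injective
      ext i
      rw [map_smul, Finsupp.smul_apply, hM i j, Module.Basis.repr_self, Finsupp.single_apply,
        smul_eq_mul]
      by_cases hij : j = i <;> simp [hij]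
    intro u
    have hmap : χ'' = a • (LinearMap.id : (R' ⊗[k] g) →ₗ[R'] (R' ⊗[k] g)) := by
      apply B.ext
      intro j
      rw [LinearMap.smul_apply, LinearMap.id_apply]
      exact hbasis j
    rw [hmap]
    rfl
  have hχbscal : ∀ u : R' ⊗[R] L, χb u = a • u := by
    intro u
    have h2 : F (χb u) = a • F u := by
      have h1 := hscal (F u)
      rw [hχ''app] at h1
      rw [show E.symm (F u) = u from F.symm_apply_apply u] at h1
      exact h1
    calc χb u = F.symm (F (χb u)) := (F.symm_apply_apply _).symm
    _ = F.symm (a • F u) := by rw [h2]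
    _ = a • u := by rw [map_smul, F.symm_apply_apply]
  -- descent of the scalar `a` to `R`
  set J : Submodule R R' := LinearMap.range (Algebra.linearMap R R') with hJ
  have hax : ∀ x : L, ((1:R') ⊗ₜ[R] (χ x) : R' ⊗[R] L) = a ⊗ₜ[R] x := by
    intro x
    have h1 := hχbscal ((1:R') ⊗ₜ[R] x)
    have h2 : χb ((1:R') ⊗ₜ[R] x) = (1:R') ⊗ₜ[R] (χ x) := by
      rw [show χb ((1:R') ⊗ₜ[R] x) = (1:R') ⊗ₜ[R] (χR x) from LinearMap.baseChange_tmul _ _ _]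
      rfl
    have h3 : a • ((1:R') ⊗ₜ[R] x) = a ⊗ₜ[R] x := by
      rw [smul_tmul', smul_eq_mul, mul_one]
    rw [← h2, h1, h3]
  have hqa : ∀ x : L, ((J.mkQ a) ⊗ₜ[R] x : (R' ⧸ J) ⊗[R] L) = 0 := by
    intro x
    have h1 := congrArg (LinearMap.rTensor L J.mkQ) (hax x)
    rw [LinearMap.rTensor_tmul, LinearMap.rTensor_tmul] at h1
    have hπ1 : J.mkQ (1:R') = 0 := by
      rw [Submodule.mkQ_apply, Submodule.Quotient.mk_eq_zero]
      exact ⟨1, by simp⟩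
    rw [hπ1, zero_tmul] at h1
    exact h1.symm
  have hqu : ∀ u : R' ⊗[R] L, ((J.mkQ a) ⊗ₜ[R] u : (R' ⧸ J) ⊗[R] (R' ⊗[R] L)) = 0 := by
    intro u
    induction u using TensorProduct.induction_on with
    | zero => rw [tmul_zero]
    | add u1 u2 h1 h2 => rw [tmul_add, h1, h2, add_zero]
    | tmul c x =>
      have h1 := congrArg (LinearMap.lTensor (R' ⧸ J) ((TensorProduct.mk R R' L) c)) (hqa x)
      simpa using h1
  let θ : (R' ⊗[R] L) →ₗ[R] R' :=
    { toFun := fun u => B.coord i₀ (F u)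
      map_add' := by
        intro u v
        show B.coord i₀ (F (u + v)) = B.coord i₀ (F u) + B.coord i₀ (F v)
        rw [map_add, map_add]
      map_smul' := by
        intro r u
        show B.coord i₀ (F (r • u)) = r • B.coord i₀ (F u)
        rw [← algebraMap_smul R' r u, map_smul, map_smul, algebraMap_smul] }
  let u₀ : R' ⊗[R] L := F.symm (B i₀)
  have hθu₀ : θ u₀ = 1 := by
    show B.coord i₀ (F (F.symm (B i₀))) = 1
    rw [F.apply_symm_apply, Module.Basis.coord_apply, Module.Basis.repr_self]
    exact Finsupp.single_eq_same
  have hq1 : ((J.mkQ a) ⊗ₜ[R] (1:R') : (R' ⧸ J) ⊗[R] R') = 0 := by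
    have h1 := congrArg (LinearMap.lTensor (R' ⧸ J) θ) (hqu u₀)
    rw [map_zero, LinearMap.lTensor_tmul, hθu₀] at h1
    exact h1
  have hq0 : (1:R') ⊗ₜ[R] (J.mkQ a) = (0 : R' ⊗[R] (R' ⧸ J)) := by
    have h1 := congrArg (TensorProduct.comm R (R' ⧸ J) R') hq1
    simpa using h1
  have hmem : a ∈ J := by
    have hz : J.mkQ a = 0 := one_tmul_eq_zero_of_faithfullyFlat hq0
    rwa [Submodule.mkQ_apply, Submodule.Quotient.mk_eq_zero] at hz
  obtain ⟨r, hr⟩ := hmem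
  have hrx : ∀ x : L, χ x = r • x := by
    intro x
    have h1 : ((1:R') ⊗ₜ[R] (χ x - r • x) : R' ⊗[R] L) = 0 := by
      rw [tmul_sub, hax x]
      have h2 : (a ⊗ₜ[R] x : R' ⊗[R] L) = (1:R') ⊗ₜ[R] (r • x) := by
        rw [← hr]
        show (algebraMap R R' r) ⊗ₜ[R] x = (1:R') ⊗ₜ[R] (r • x)
        rw [Algebra.algebraMap_eq_smul_one, smul_tmul]
      rw [h2, sub_self]
    have h3 := one_tmul_eq_zero_of_faithfullyFlat h1
    rwa [sub_eq_zero] at h3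
  refine ⟨r, hrx, ?_⟩
  intro y hy
  have h0 : ∀ x : L, (r - y) • x = 0 := by
    intro x; rw [sub_smul, ← hrx x, ← hy x, sub_self]
  set a₂ : R' := algebraMap R R' (r - y) with ha₂
  have hu : ∀ u : R' ⊗[R] L, a₂ • u = 0 := by
    intro u
    induction u using TensorProduct.induction_on with
    | zero => rw [smul_zero]
    | add u1 u2 h1 h2 => rw [smul_add, h1, h2, add_zero]
    | tmul c x =>
      have h1 : a₂ * c = (r - y) • c := (Algebra.smul_def (r - y) c).symm
      rw [smul_tmul', smul_eq_mul, h1, smul_tmul, h0, tmul_zero]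
  have hB0 : a₂ • (B i₀) = (0 : R' ⊗[k] g) := by
    have h1 := congrArg F (hu u₀)
    rw [map_smul, map_zero] at h1
    rw [show F u₀ = B i₀ from F.apply_symm_apply _] at h1
    exact h1
  have ha₂0 : a₂ = 0 := by
    have h1 := congrArg (fun w => B.repr w i₀) hB0
    simpa using h1
  have hfin : r - y = 0 := by
    have h1 : ((1:R') ⊗ₜ[R] (r - y) : R' ⊗[R] R) = 0 := by
      have h2 : ((1:R') ⊗ₜ[R] (r - y) : R' ⊗[R] R) = a₂ ⊗ₜ[R] (1:R) := by
        rw [ha₂, Algebra.algebraMap_eq_smul_one, smul_tmul, smul_eq_mul, mul_one]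
      rw [h2, ha₂0, zero_tmul]
    exact one_tmul_eq_zero_of_faithfullyFlat h1
  exact (sub_eq_zero.mp hfin).symm
end

section
/- Let k be a commutative ring, A a k-module, S a commutative k-algebra, and D : S → S a k-derivation. Let S₀ = {s ∈ S : D(s) = 0}, a k-subalgebra of S. Let u be an S-linear automorphism of the S-module A ⊗_k S such that for every a ∈ A, the element u⁻¹(a ⊗ 1) lies in the image of A ⊗_k S₀ in A ⊗_k S (i.e. u⁻¹(a ⊗ 1) is a sum of elements a_i ⊗ s_i with D(s_i) = 0). Then u commutes with id_A ⊗ D: u ∘ (id_A ⊗ D) = (id_A ⊗ D) ∘ u as k-linear endomorphisms of A ⊗_k S. -/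
open TensorProduct

/-- Let `k` be a commutative ring, `A` a `k`-module, `S` a commutative
`k`-algebra and `D` a `k`-derivation of `S`; let `S₀ = ker D` be the constants.  If `u`
is an `S`-linear automorphism of the `S`-module `S ⊗[k] A` (the base change of `A`,
written with the ring factor on the left) such that `u⁻¹(1 ⊗ a)` lies in the image of
`S₀ ⊗[k] A` for every `a ∈ A`, then `u` commutes with `D ⊗ id_A`. -/
theorem automorphism_commutes_with_derivation
    (k : Type*) [CommRing k] (A : Type*) [AddCommGroup A] [Module k A]
    (S : Type*) [CommRing S] [Algebra k S]
    (D : Derivation k S S)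
    (u : (S ⊗[k] A) ≃ₗ[S] (S ⊗[k] A))
    (hu : ∀ a : A, u.symm ((1 : S) ⊗ₜ[k] a) ∈
      Submodule.span k {x : S ⊗[k] A | ∃ (s : S) (a' : A), D s = 0 ∧ x = s ⊗ₜ[k] a'}) :
    ∀ x : S ⊗[k] A,
      u (LinearMap.rTensor A D.toLinearMap x) = LinearMap.rTensor A D.toLinearMap (u x) := by
  set E := LinearMap.rTensor A D.toLinearMap with hE
  -- Leibniz rule for E
  have hLeib : ∀ (s : S) (x : S ⊗[k] A), E (s • x) = (D s) • x + s • E x := by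
    intro s x
    induction x using TensorProduct.induction_on with
    | zero => simp
    | tmul t a =>
      simp only [hE, smul_tmul', smul_eq_mul, LinearMap.rTensor_tmul,
        Derivation.leibniz, Derivation.coeFn_coe, add_tmul, smul_eq_mul]
      ring_nf
      abel
    | add x y hx hy =>
      simp only [smul_add, map_add, hx, hy]
      abel
  -- E kills u.symm (1 ⊗ a)
  have hker : ∀ a : A, E (u.symm ((1 : S) ⊗ₜ[k] a)) = 0 := by
    intro a
    refine Submodule.span_induction ?_ ?_ ?_ ?_ (hu a)
    · rintro x ⟨s, a', hs, rfl⟩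
      simp [hE, hs]
    · simp
    · intro x y _ _ hx hy; simp [hx, hy]
    · intro c x _ hx; simp [hx]
  -- u.symm commutes with E
  have hsymm : ∀ x : S ⊗[k] A, u.symm (E x) = E (u.symm x) := by
    intro x
    induction x using TensorProduct.induction_on with
    | zero => simp
    | tmul s a =>
      have h1 : (s : S) ⊗ₜ[k] a = s • ((1 : S) ⊗ₜ[k] a) := by
        simp [smul_tmul']
      have h2 : E (s ⊗ₜ[k] a) = (D s) • ((1 : S) ⊗ₜ[k] a) := by
        simp [hE, smul_tmul']
      rw [h2, map_smul, h1, map_smul, hLeib, hker, smul_zero, add_zero]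
    | add x y hx hy => simp [map_add, hx, hy]
  intro x
  have := hsymm (u x)
  rw [u.symm_apply_apply] at this
  rw [← this, u.apply_symm_apply]
end

section
/- Let k be a commutative ring, R a commutative k-algebra, and L a Lie algebra over R (hence also over k, with compatible scalar actions). Assume that every k-linear endomorphism χ of L satisfying χ([x,y]) = [χ(x),y] = [x,χ(y)] for all x, y ∈ L is of the form x ↦ r • x for a unique r ∈ R. Then for every k-linear Lie derivation δ : L → L there exists a unique k-derivation d : R → R such that δ(r • x) = d(r) • x + r • δ(x) for all r ∈ R and x ∈ L. Moreover the resulting map η : Der_k(L) → Der_k(R), δ ↦ d, is a homomorphism of Lie algebras over k, and its kernel is exactly the set of R-linear derivations of L: η(δ) = 0 if and only if δ(r • x) = r • δ(x) for all r ∈ R, x ∈ L. In particular the R-linear derivations form a Lie ideal of Der_k(L). -/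
/-- Let `k` be a commutative ring, `R` a commutative `k`-algebra and
`L` a Lie algebra over `R` (hence over `k`, with compatible actions).  Assume the
canonical map `R → Ctd_k(L)` is an isomorphism: every `k`-linear endomorphism `χ` of
`L` with `χ ⁅x,y⁆ = ⁅χ x, y⁆ = ⁅x, χ y⁆` is the homothety by a unique `r ∈ R`.  Then
there is a Lie algebra homomorphism `η : Der_k(L) → Der_k(R)` characterised by
`δ (r • x) = η δ r • x + r • δ x`; the derivation `η δ` is unique with this property,
and the kernel of `η` is exactly the set of `R`-linear derivations of `L`. -/
theorem eta_exists_unique_lieHom_kernel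
    (k : Type*) [CommRing k] (R : Type*) [CommRing R] [Algebra k R]
    (L : Type*) [LieRing L] [LieAlgebra R L]
    [LieAlgebra k L] [IsScalarTower k R L]
    (hcent : ∀ χ : L →ₗ[k] L,
      (∀ x y : L, χ ⁅x, y⁆ = ⁅χ x, y⁆ ∧ χ ⁅x, y⁆ = ⁅x, χ y⁆) →
      ∃! r : R, ∀ x : L, χ x = r • x) :
    ∃ η : LieDerivation k L L →ₗ⁅k⁆ Derivation k R R,
      (∀ (δ : LieDerivation k L L) (r : R) (x : L),
        δ (r • x) = η δ r • x + r • δ x) ∧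
      (∀ (δ : LieDerivation k L L) (d : Derivation k R R),
        (∀ (r : R) (x : L), δ (r • x) = d r • x + r • δ x) → η δ = d) ∧
      (∀ δ : LieDerivation k L L,
        η δ = 0 ↔ ∀ (r : R) (x : L), δ (r • x) = r • δ x) := by
  classical
  -- faithfulness: homotheties are determined by their action
  have faith : ∀ s t : R, (∀ x : L, s • x = t • x) → s = t := by
    intro s t hst
    have hb : ∀ x y : L, (s • LinearMap.id (R := k) (M := L)) ⁅x, y⁆ =
        ⁅(s • LinearMap.id (R := k) (M := L)) x, y⁆ ∧
        (s • LinearMap.id (R := k) (M := L)) ⁅x, y⁆ =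
        ⁅x, (s • LinearMap.id (R := k) (M := L)) y⁆ := by
      intro x y
      constructor
      · simp [smul_lie]
      · simp [lie_smul]
    obtain ⟨r, _, hu⟩ := hcent _ hb
    have h1 : s = r := hu s (fun x => rfl)
    have h2 : t = r := hu t (fun x => by simpa using hst x)
    rw [h1, h2]
  -- the defining property
  have key : ∀ (δ : LieDerivation k L L) (r : R),
      ∃! s : R, ∀ x : L, δ (r • x) = s • x + r • δ x := by
    intro δ r
    let χ : L →ₗ[k] L :=
      { toFun := fun x => δ (r • x) - r • δ x
        map_add' := by intro x y; simp [smul_add, map_add]; abel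
        map_smul' := by
          intro c x
          have h1 : δ (r • c • x) = c • δ (r • x) := by
            rw [smul_comm r c x, map_smul]
          simp only [RingHom.id_apply, h1, map_smul, smul_comm r c (δ x), smul_sub] }
    have hχ : ∀ x y : L, χ ⁅x, y⁆ = ⁅χ x, y⁆ ∧ χ ⁅x, y⁆ = ⁅x, χ y⁆ := by
      intro x y
      constructor
      · show δ (r • ⁅x, y⁆) - r • δ ⁅x, y⁆ = ⁅δ (r • x) - r • δ x, y⁆
        rw [← smul_lie, δ.apply_lie_eq_add, δ.apply_lie_eq_add, sub_lie,
          smul_lie r (δ x) y, smul_lie r x (δ y), smul_add]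
        abel
      · show δ (r • ⁅x, y⁆) - r • δ ⁅x, y⁆ = ⁅x, δ (r • y) - r • δ y⁆
        rw [← lie_smul, δ.apply_lie_eq_add, δ.apply_lie_eq_add, lie_sub,
          lie_smul r x (δ y), lie_smul r (δ x) y, smul_add]
        abel
    obtain ⟨s, hs, hu⟩ := hcent χ hχ
    refine ⟨s, fun x => ?_, fun t ht => hu t fun x => ?_⟩
    · have h' : δ (r • x) - r • δ x = s • x := hs x
      rw [← h']; abel
    · show δ (r • x) - r • δ x = t • x
      rw [ht x]; abel
  choose D hD hDu using key
  -- D δ is additive / k-linear / Leibniz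
  have hadd : ∀ (δ : LieDerivation k L L) (r s : R),
      D δ (r + s) = D δ r + D δ s := by
    intro δ r s
    refine faith _ _ fun x => ?_
    have h1 := hD δ r x
    have h2 := hD δ s x
    have h3 := hD δ (r + s) x
    have hc : δ ((r + s) • x) = (D δ r + D δ s) • x + (r + s) • δ x := by
      rw [add_smul r s x, map_add, h1, h2, add_smul (D δ r), add_smul r s (δ x)]
      abel
    exact add_right_cancel (h3.symm.trans hc)
  have hsmul : ∀ (δ : LieDerivation k L L) (c : k) (r : R),
      D δ (c • r) = c • D δ r := by
    intro δ c r
    refine faith _ _ fun x => ?_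
    have h3 := hD δ (c • r) x
    have h1 := hD δ r x
    have hc : δ ((c • r) • x) = (c • D δ r) • x + (c • r) • δ x := by
      rw [smul_assoc c r x, map_smul, h1, smul_add, smul_assoc, smul_assoc]
    exact add_right_cancel (h3.symm.trans hc)
  have hmul : ∀ (δ : LieDerivation k L L) (r s : R),
      D δ (r * s) = r * D δ s + s * D δ r := by
    intro δ r s
    refine faith _ _ fun x => ?_
    have h3 := hD δ (r * s) x
    have h1 := hD δ s x
    have hc : δ ((r * s) • x) = (r * D δ s + s * D δ r) • x + (r * s) • δ x := by
      rw [mul_smul, hD δ r (s • x), h1, smul_add, smul_smul, smul_smul, smul_smul,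
        add_smul, mul_comm (D δ r) s]
      abel
    exact add_right_cancel (h3.symm.trans hc)
  -- package into a derivation
  let Dd : LieDerivation k L L → Derivation k R R := fun δ =>
    Derivation.mk'
      { toFun := D δ
        map_add' := hadd δ
        map_smul' := by intro c r; simpa using hsmul δ c r }
      (by intro a b; simpa [smul_eq_mul] using hmul δ a b)
  have hDd : ∀ (δ : LieDerivation k L L) (r : R), Dd δ r = D δ r := fun _ _ => rfl
  -- uniqueness as a function into derivations
  have hDdu : ∀ (δ : LieDerivation k L L) (d : Derivation k R R),
      (∀ (r : R) (x : L), δ (r • x) = d r • x + r • δ x) → Dd δ = d := by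
    intro δ d hd
    ext r
    rw [hDd, ← (hDu δ r (d r) fun x => hd r x)]
  -- η as a Lie homomorphism
  refine ⟨{ toFun := Dd
            map_add' := ?_
            map_smul' := ?_
            map_lie' := ?_ }, ?_, ?_, ?_⟩
  · intro δ1 δ2
    refine hDdu (δ1 + δ2) (Dd δ1 + Dd δ2) fun r x => ?_
    have h1 := hD δ1 r x
    have h2 := hD δ2 r x
    show (δ1 + δ2) (r • x) = (D δ1 r + D δ2 r) • x + r • (δ1 + δ2) x
    rw [LieDerivation.coe_add, Pi.add_apply, Pi.add_apply, h1, h2, add_smul, smul_add]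
    abel
  · intro c δ
    refine hDdu (c • δ) (c • Dd δ) fun r x => ?_
    have h1 := hD δ r x
    show (c • δ) (r • x) = (c • D δ r) • x + r • (c • δ) x
    rw [LieDerivation.coe_smul, Pi.smul_apply, Pi.smul_apply, h1, smul_add, smul_assoc,
      smul_comm r c (δ x)]
  · intro δ1 δ2
    refine hDdu ⁅δ1, δ2⁆ ⁅Dd δ1, Dd δ2⁆ fun r x => ?_
    rw [LieDerivation.commutator_apply, hD δ2 r x, map_add, hD δ1 (D δ2 r) x,
      hD δ1 r (δ2 x), hD δ1 r x, map_add, hD δ2 (D δ1 r) x, hD δ2 r (δ1 x),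
      Derivation.commutator_apply, LieDerivation.commutator_apply, hDd, hDd, hDd, hDd,
      sub_smul, smul_sub]
    abel
  · intro δ r x
    exact hD δ r x
  · intro δ d hd
    exact hDdu δ d hd
  · intro δ
    constructor
    · intro h r x
      have h0 : Dd δ r = 0 := by
        have := DFunLike.congr_fun (congrArg (fun d : Derivation k R R => d) h) r
        simpa using this
      have := hD δ r x
      rw [← hDd, h0, zero_smul, zero_add] at this
      exact this
    · intro h
      refine hDdu δ 0 fun r x => ?_
      have h0 : ((0 : Derivation k R R) r) = 0 := rfl
      rw [h0, zero_smul, zero_add]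
      exact h r x
end

section
/- Let k be a commutative ring, n ≥ 1, and m₁, …, mₙ positive integers each invertible in k. Let S = k[u₁^{±1}, …, uₙ^{±1}] be the Laurent polynomial ring in n variables over k (the group algebra of ℤⁿ over k), and let φ : S → S be the k-algebra homomorphism determined by φ(uᵢ) = uᵢ^{mᵢ} for each i (induced by the group homomorphism ℤⁿ → ℤⁿ multiplying the i-th coordinate by mᵢ). Then S, regarded as an algebra over itself via φ, is faithfully flat and formally étale: S is a faithfully flat module over its subring φ(S), and the ring extension φ : S → S is formally étale. -/
open Multiplicative


section Hensel
variable {C : Type*} [CommRing C] (I : Ideal C) (hI : I ^ 2 = ⊥)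

include hI in
lemma sqzero_of_mem (x : C) (hx : x ∈ I) : x * x = 0 := by
  have : x * x ∈ I ^ 2 := by rw [pow_two]; exact Ideal.mul_mem_mul hx hx
  rw [hI] at this; simpa using this

lemma one_add_pow_sq_zero (x : C) (hx : x * x = 0) (M : ℕ) :
    (1 + x) ^ M = 1 + (M : C) * x := by
  have hx2 : x ^ 2 = 0 := by rwa [pow_two]
  induction M with
  | zero => simp
  | succ M ih =>
      rw [pow_succ, ih]
      push_cast
      ring_nf
      linear_combination (M : C) * hx2

include hI in
lemma unit_lift (w : (C ⧸ I)ˣ) : ∃ c : Cˣ, Ideal.Quotient.mk I (c : C) = (w : C ⧸ I) := by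
  obtain ⟨x, hx⟩ := Ideal.Quotient.mk_surjective (w : C ⧸ I)
  obtain ⟨y, hy⟩ := Ideal.Quotient.mk_surjective ((w⁻¹ : (C ⧸ I)ˣ) : C ⧸ I)
  have hmem : x * y - 1 ∈ I := by
    rw [← Ideal.Quotient.eq_zero_iff_mem]
    simp [hx, hy, ← Units.val_mul]
  set t := x * y - 1 with ht
  have ht2 : t * t = 0 := sqzero_of_mem I hI t hmem
  have hxy : x * (y * (1 - t)) = 1 := by
    have h1 : x * y = 1 + t := by rw [ht]; ring
    calc x * (y * (1 - t)) = (x * y) * (1 - t) := by ring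
    _ = (1 + t) * (1 - t) := by rw [h1]
    _ = 1 - t * t := by ring
    _ = 1 := by rw [ht2]; ring
  refine ⟨⟨x, y * (1 - t), hxy, by rw [mul_comm] at hxy; exact hxy⟩, hx⟩

include hI in
lemma hensel_exists (M : ℕ) (hM : IsUnit (M : C)) (a c : Cˣ)
    (h : Ideal.Quotient.mk I ((c : C) ^ M) = Ideal.Quotient.mk I (a : C)) :
    ∃ d : Cˣ, d ^ M = a ∧ Ideal.Quotient.mk I (d : C) = Ideal.Quotient.mk I (c : C) := by
  obtain ⟨mu, hmu⟩ := hM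
  set t : C := (a : C) * ((c⁻¹ : Cˣ) : C) ^ M - 1 with ht
  have hcc : (c : C) * ((c⁻¹ : Cˣ) : C) = 1 := by
    rw [← Units.val_mul, mul_inv_cancel, Units.val_one]
  have hccM : ((c : C)) ^ M * (((c⁻¹ : Cˣ) : C)) ^ M = 1 := by
    rw [← mul_pow, hcc, one_pow]
  have htI : t ∈ I := by
    rw [← Ideal.Quotient.eq_zero_iff_mem, ht]
    have h2 : (Ideal.Quotient.mk I (a : C)) * (Ideal.Quotient.mk I ((c⁻¹ : Cˣ) : C)) ^ M = 1 := by
      rw [← h, ← map_pow, ← map_mul, hccM, map_one]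
    simp only [map_sub, map_mul, map_one, map_pow]
    rw [h2]; ring
  set ε : C := (↑mu⁻¹ : C) * t with hε
  have hε2 : ε * ε = 0 := by
    have h3 : ε * ε = (↑mu⁻¹ : C) * (↑mu⁻¹ : C) * (t * t) := by rw [hε]; ring
    rw [h3, sqzero_of_mem I hI t htI, mul_zero]
  have hMε : (M : C) * ε = t := by
    rw [hε, ← mul_assoc, ← hmu, ← Units.val_mul, mul_inv_cancel, Units.val_one, one_mul]
  have huu : (1 + ε) * (1 - ε) = 1 := by
    have h4 : (1 + ε) * (1 - ε) = 1 - ε * ε := by ring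
    rw [h4, hε2, sub_zero]
  refine ⟨c * ⟨1 + ε, 1 - ε, huu, by rw [mul_comm] at huu; exact huu⟩, ?_, ?_⟩
  · apply Units.ext
    rw [Units.val_pow_eq_pow_val, Units.val_mul]
    show ((c : C) * (1 + ε)) ^ M = (a : C)
    rw [mul_pow, one_add_pow_sq_zero ε hε2 M, hMε, ht]
    linear_combination (a : C) * hccM
  · have hεI : ε ∈ I := Ideal.mul_mem_left I _ htI
    have hε0 : Ideal.Quotient.mk I ε = 0 := Ideal.Quotient.eq_zero_iff_mem.mpr hεI
    rw [Units.val_mul]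
    show Ideal.Quotient.mk I ((c : C) * (1 + ε)) = _
    rw [map_mul, map_add, map_one, hε0, add_zero, mul_one]

include hI in
lemma hensel_unique (M : ℕ) (hM : IsUnit (M : C)) (d d' : Cˣ)
    (h1 : d ^ M = d' ^ M) (h2 : Ideal.Quotient.mk I (d : C) = Ideal.Quotient.mk I (d' : C)) :
    d = d' := by
  obtain ⟨mu, hmu⟩ := hM
  set x : C := (d : C) * ((d'⁻¹ : Cˣ) : C) - 1 with hx
  have hxI : x ∈ I := by
    rw [← Ideal.Quotient.eq_zero_iff_mem, hx, map_sub, map_mul, h2, ← map_mul,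
      ← Units.val_mul, mul_inv_cancel, Units.val_one, map_one, sub_self]
  have hx2 : x * x = 0 := sqzero_of_mem I hI x hxI
  have hpow : (1 + x) ^ M = 1 := by
    have h1x : (1 + x) = (d : C) * ((d'⁻¹ : Cˣ) : C) := by rw [hx]; ring
    rw [h1x, mul_pow, ← Units.val_pow_eq_pow_val, ← Units.val_pow_eq_pow_val, h1,
      ← Units.val_mul, ← mul_pow, mul_inv_cancel, one_pow, Units.val_one]
  rw [one_add_pow_sq_zero x hx2 M] at hpow
  have hMx : (M : C) * x = 0 := by linear_combination hpow
  have hx0 : x = 0 := by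
    have h5 : x = (↑mu⁻¹ : C) * ((M : C) * x) := by
      rw [← mul_assoc, ← hmu, ← Units.val_mul, inv_mul_cancel, Units.val_one, one_mul]
    rw [h5, hMx, mul_zero]
  have hdd : (d : C) * ((d'⁻¹ : Cˣ) : C) = 1 := by
    rw [hx] at hx0; linear_combination hx0
  apply Units.ext
  calc (d : C) = (d : C) * (((d'⁻¹ : Cˣ) : C) * (d' : C)) := by
        rw [← Units.val_mul, inv_mul_cancel, Units.val_one, mul_one]
  _ = ((d : C) * ((d'⁻¹ : Cˣ) : C)) * (d' : C) := by ring
  _ = (d' : C) := by rw [hdd, one_mul]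

end Hensel
set_option maxHeartbeats 800000 in
lemma hom_eq_prod {n : ℕ} {W : Type*} [CommGroup W]
    (ψ : Multiplicative (Fin n → ℤ) →* W) (e : Fin n → ℤ) :
    ψ (ofAdd e) = ∏ i, ψ (ofAdd (Pi.single i 1)) ^ (e i) := by
  have he : e = ∑ i, (e i) • Pi.single i (1 : ℤ) := by
    conv_lhs => rw [← Finset.univ_sum_single e]
    refine Finset.sum_congr rfl fun i _ => ?_
    rw [← Pi.single_smul, smul_eq_mul, mul_one]
  calc ψ (ofAdd e) = ψ (∏ i, ofAdd ((e i) • Pi.single i (1:ℤ))) := by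
        rw [← ofAdd_sum, ← he]
  _ = ∏ i, ψ (ofAdd ((e i) • Pi.single i (1:ℤ))) := map_prod ψ _ _
  _ = ∏ i, ψ (ofAdd (Pi.single i 1)) ^ (e i) := by
        refine Finset.prod_congr rfl fun i _ => ?_
        rw [ofAdd_zsmul, map_zpow]
open AddMonoidAlgebra

section Flat

variable {k : Type*} [CommRing k] {n : ℕ} (m : Fin n → ℕ) (hm : ∀ i, 0 < m i)
  (f : (Fin n → ℤ) →+ (Fin n → ℤ)) (hf : ∀ (e : Fin n → ℤ) (i : Fin n), f e i = (m i : ℤ) * e i)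

/-- coset representatives -/
def laurentT (m : Fin n → ℕ) : Type _ := Π i : Fin n, Fin (m i)

theorem laurentT_nonempty (hm : ∀ i, 0 < m i) : Nonempty (laurentT m) := ⟨fun i => ⟨0, hm i⟩⟩

def laurentSigma (hm : ∀ i, 0 < m i)
    (hf : ∀ (e : Fin n → ℤ) (i : Fin n), f e i = (m i : ℤ) * e i) :
    laurentT m × (Fin n → ℤ) ≃ (Fin n → ℤ) where
  toFun p := f p.2 + fun i => ((p.1 i : ℕ) : ℤ)
  invFun e := (fun i => ⟨(e i % (m i : ℤ)).toNat, by
      have h0 : ((m i : ℤ)) ≠ 0 := by exact_mod_cast (hm i).ne'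
      have h1 : 0 ≤ e i % (m i : ℤ) := Int.emod_nonneg _ h0
      have h2 : e i % (m i : ℤ) < (m i : ℤ) := Int.emod_lt_of_pos _ (by exact_mod_cast hm i)
      omega⟩,
    fun i => e i / (m i : ℤ))
  left_inv := by
    rintro ⟨r, q⟩
    have key : ∀ i, f q i + ((r i : ℕ) : ℤ) = (m i : ℤ) * q i + ((r i : ℕ) : ℤ) := by
      intro i; rw [hf]
    refine Prod.ext ?_ ?_
    · funext i
      apply Fin.ext
      simp only [Pi.add_apply, key i]
      have h2 : ((r i : ℕ) : ℤ) + (m i : ℤ) * q i = ((r i : ℕ) : ℤ) + (q i) * (m i : ℤ) := by ring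
      have h0 : (0:ℤ) ≤ ((r i : ℕ) : ℤ) := Int.natCast_nonneg _
      have h1 : ((r i : ℕ) : ℤ) < (m i : ℤ) := by exact_mod_cast (r i).is_lt
      rw [show (m i : ℤ) * q i + ((r i : ℕ) : ℤ) = ((r i : ℕ) : ℤ) + (m i : ℤ) * q i by ring,
        Int.add_mul_emod_self_left, Int.emod_eq_of_lt h0 h1]
      simp
    · funext i
      simp only [Pi.add_apply, key i]
      have h0 : (0:ℤ) ≤ ((r i : ℕ) : ℤ) := Int.natCast_nonneg _
      have h1 : ((r i : ℕ) : ℤ) < (m i : ℤ) := by exact_mod_cast (r i).is_lt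
      have hm0 : ((m i : ℤ)) ≠ 0 := by exact_mod_cast (hm i).ne'
      rw [show (m i : ℤ) * q i + ((r i : ℕ) : ℤ) = ((r i : ℕ) : ℤ) + (m i : ℤ) * q i by ring,
        Int.add_mul_ediv_left _ _ hm0, Int.ediv_eq_zero_of_lt h0 h1, zero_add]
  right_inv := by
    intro e
    funext i
    simp only [Pi.add_apply]
    rw [hf]
    have h0 : ((m i : ℤ)) ≠ 0 := by exact_mod_cast (hm i).ne'
    have h1 : 0 ≤ e i % (m i : ℤ) := Int.emod_nonneg _ h0
    rw [Int.toNat_of_nonneg h1, Int.mul_ediv_add_emod]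

end Flat


section Flat2
variable {k : Type*} [CommRing k] {n : ℕ} (m : Fin n → ℕ) (hm : ∀ i, 0 < m i)
  (f : (Fin n → ℤ) →+ (Fin n → ℤ)) (hf : ∀ (e : Fin n → ℤ) (i : Fin n), f e i = (m i : ℤ) * e i)

noncomputable def E0 : AddMonoidAlgebra k (Fin n → ℤ) ≃ₗ[k]
    ((laurentT m) →₀ AddMonoidAlgebra k (Fin n → ℤ)) :=
  (AddMonoidAlgebra.coeffLinearEquiv k).trans
    (((Finsupp.domLCongr (laurentSigma m f hm hf).symm).trans (Finsupp.curryLinearEquiv k)).trans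
      (Finsupp.mapRange.linearEquiv (AddMonoidAlgebra.coeffLinearEquiv k).symm))

lemma E0_single (e : Fin n → ℤ) (c : k) :
    E0 m hm f hf (AddMonoidAlgebra.single e c) =
      Finsupp.single ((laurentSigma m f hm hf).symm e).1
        (AddMonoidAlgebra.single ((laurentSigma m f hm hf).symm e).2 c) := by
  classical
  simp only [E0, LinearEquiv.trans_apply]
  rw [show AddMonoidAlgebra.coeffLinearEquiv k (AddMonoidAlgebra.single e c)
    = Finsupp.single e c from rfl, Finsupp.domLCongr_single]
  simp only [Finsupp.curryLinearEquiv_apply, Finsupp.curry_single,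
    Finsupp.mapRange.linearEquiv_apply, Finsupp.mapRange_single]
  rfl

lemma sigma_symm_add (q' e : Fin n → ℤ) :
    (laurentSigma m f hm hf).symm (f q' + e) =
      (((laurentSigma m f hm hf).symm e).1, q' + ((laurentSigma m f hm hf).symm e).2) := by
  set σ := laurentSigma m f hm hf with hσdef
  rw [Equiv.symm_apply_eq]
  have hσ : f (σ.symm e).2 + (fun i => (((σ.symm e).1 i : ℕ) : ℤ)) = e := σ.apply_symm_apply e
  show _ = f (q' + (σ.symm e).2) + _
  rw [map_add, add_assoc, hσ]

noncomputable def E0' : AddMonoidAlgebra k (Fin n → ℤ) →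
    (laurentT m →₀ AddMonoidAlgebra k (Fin n → ℤ)) := fun x => E0 m hm f hf x

lemma E0'_add (x y : AddMonoidAlgebra k (Fin n → ℤ)) :
    E0' m hm f hf (x + y) = E0' m hm f hf x + E0' m hm f hf y := map_add (E0 m hm f hf) x y

lemma E0'_zero : E0' m hm f hf (0 : AddMonoidAlgebra k (Fin n → ℤ)) = 0 :=
  map_zero (E0 m hm f hf)

lemma E0'_single (e : Fin n → ℤ) (c : k) :
    E0' m hm f hf (AddMonoidAlgebra.single e c) =
      Finsupp.single ((laurentSigma m f hm hf).symm e).1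
        (AddMonoidAlgebra.single ((laurentSigma m f hm hf).symm e).2 c) := E0_single m hm f hf e c

lemma phi_single (q : Fin n → ℤ) (c : k) :
    (AddMonoidAlgebra.mapDomainAlgHom k k f) (AddMonoidAlgebra.single q c) =
      AddMonoidAlgebra.single (f q) c := by simp

lemma E0'_single' (e : Fin n → ℤ) (c : k) :
    E0' m hm f hf (AddMonoidAlgebra.single e c) =
      Finsupp.single ((laurentSigma m f hm hf).symm e).1
        (AddMonoidAlgebra.single ((laurentSigma m f hm hf).symm e).2 c) :=
  E0_single m hm f hf e c

lemma key_single (q' e : Fin n → ℤ) (c' c : k) :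
    E0' m hm f hf ((AddMonoidAlgebra.mapDomainAlgHom k k f)
        (AddMonoidAlgebra.single q' c') * AddMonoidAlgebra.single e c) =
      AddMonoidAlgebra.single q' c' • E0' m hm f hf (AddMonoidAlgebra.single e c) := by
  rw [phi_single, AddMonoidAlgebra.single_mul_single, E0'_single', E0'_single',
    sigma_symm_add m hm f hf q' e, Finsupp.smul_single]
  congr 1
  rw [smul_eq_mul, AddMonoidAlgebra.single_mul_single]

lemma key_smul_single (a : AddMonoidAlgebra k (Fin n → ℤ)) (e : Fin n → ℤ) (c : k) :
    E0' m hm f hf ((AddMonoidAlgebra.mapDomainAlgHom k k f) a * AddMonoidAlgebra.single e c) =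
      a • E0' m hm f hf (AddMonoidAlgebra.single e c) := by
  induction a using AddMonoidAlgebra.induction with
  | zero => rw [map_zero, zero_mul, E0'_zero, zero_smul]
  | single_add q' c' a _ _ ih =>
      rw [map_add, add_mul, E0'_add, add_smul, ih, key_single]

lemma key_smul (a b : AddMonoidAlgebra k (Fin n → ℤ)) :
    E0' m hm f hf ((AddMonoidAlgebra.mapDomainAlgHom k k f) a * b) =
      a • E0' m hm f hf b := by
  induction b using AddMonoidAlgebra.induction with
  | zero => rw [mul_zero, E0'_zero, smul_zero]
  | single_add e c b _ _ ih =>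
      rw [mul_add, E0'_add, E0'_add, smul_add, ih, key_smul_single]

end Flat2

section Flat3
variable {k : Type*} [CommRing k] {n : ℕ}

noncomputable def Elin (m : Fin n → ℕ) (hm : ∀ i, 0 < m i) (f : (Fin n → ℤ) →+ (Fin n → ℤ))
    (hf : ∀ (e : Fin n → ℤ) (i : Fin n), f e i = (m i : ℤ) * e i) :
    @LinearEquiv (AddMonoidAlgebra k (Fin n → ℤ)) (AddMonoidAlgebra k (Fin n → ℤ)) _ _
      (RingHom.id _) (RingHom.id _) RingHomInvPair.ids RingHomInvPair.ids
      (AddMonoidAlgebra k (Fin n → ℤ)) ((laurentT m) →₀ AddMonoidAlgebra k (Fin n → ℤ)) _ _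
      (@Algebra.toModule _ _ _ _ ((AddMonoidAlgebra.mapDomainAlgHom k k f).toRingHom.toAlgebra))
      (Finsupp.module (laurentT m) (AddMonoidAlgebra k (Fin n → ℤ))) :=
  @LinearEquiv.mk (AddMonoidAlgebra k (Fin n → ℤ)) (AddMonoidAlgebra k (Fin n → ℤ)) _ _
      (RingHom.id _) (RingHom.id _) RingHomInvPair.ids RingHomInvPair.ids
      (AddMonoidAlgebra k (Fin n → ℤ)) ((laurentT m) →₀ AddMonoidAlgebra k (Fin n → ℤ)) _ _
      (@Algebra.toModule _ _ _ _ ((AddMonoidAlgebra.mapDomainAlgHom k k f).toRingHom.toAlgebra))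
      (Finsupp.module (laurentT m) (AddMonoidAlgebra k (Fin n → ℤ)))
    (@LinearMap.mk (AddMonoidAlgebra k (Fin n → ℤ)) (AddMonoidAlgebra k (Fin n → ℤ)) _ _
      (RingHom.id _)
      (AddMonoidAlgebra k (Fin n → ℤ)) ((laurentT m) →₀ AddMonoidAlgebra k (Fin n → ℤ)) _ _
      (@Algebra.toModule _ _ _ _ ((AddMonoidAlgebra.mapDomainAlgHom k k f).toRingHom.toAlgebra))
      (Finsupp.module (laurentT m) (AddMonoidAlgebra k (Fin n → ℤ)))
      (AddHom.mk (E0' m hm f hf) (E0'_add m hm f hf))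
      (fun a x => key_smul m hm f hf a x))
    (fun y => (E0 m hm f hf).symm y)
    (E0 m hm f hf).left_inv (E0 m hm f hf).right_inv

lemma flat_aux (m : Fin n → ℕ) (hm : ∀ i, 0 < m i) (f : (Fin n → ℤ) →+ (Fin n → ℤ))
    (hf : ∀ (e : Fin n → ℤ) (i : Fin n), f e i = (m i : ℤ) * e i) :
    (@Module.FaithfullyFlat (AddMonoidAlgebra k (Fin n → ℤ)) (AddMonoidAlgebra k (Fin n → ℤ))
      _ _ (@Algebra.toModule _ _ _ _
        ((AddMonoidAlgebra.mapDomainAlgHom k k f).toRingHom.toAlgebra))) := by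
  haveI : Nonempty (laurentT m) := ⟨fun i => ⟨0, hm i⟩⟩
  exact @Module.FaithfullyFlat.of_linearEquiv (AddMonoidAlgebra k (Fin n → ℤ))
    ((laurentT m) →₀ AddMonoidAlgebra k (Fin n → ℤ)) _ _ _
    (AddMonoidAlgebra k (Fin n → ℤ)) _
    (@Algebra.toModule _ _ _ _ ((AddMonoidAlgebra.mapDomainAlgHom k k f).toRingHom.toAlgebra))
    (Module.FaithfullyFlat.finsupp (R := AddMonoidAlgebra k (Fin n → ℤ)) (laurentT m))
    (Elin m hm f hf)

end Flat3

open AddMonoidAlgebra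

section Etale
variable {k : Type*} [CommRing k] {n : ℕ}

-- basic computations
lemma phi_single' (f : (Fin n → ℤ) →+ (Fin n → ℤ)) (q : Fin n → ℤ) (c : k) :
    (AddMonoidAlgebra.mapDomainAlgHom k k f) (AddMonoidAlgebra.single q c) =
      AddMonoidAlgebra.single (f q) c := by simp

lemma f_delta (m : Fin n → ℕ) (f : (Fin n → ℤ) →+ (Fin n → ℤ))
    (hf : ∀ (e : Fin n → ℤ) (i : Fin n), f e i = (m i : ℤ) * e i) (i : Fin n) :
    f (Pi.single i 1) = (m i) • (Pi.single i (1:ℤ)) := by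
  funext j
  rw [hf]
  rw [Pi.smul_apply, nsmul_eq_mul]
  by_cases h : j = i
  · subst h; rw [Pi.single_eq_same]
  · rw [Pi.single_eq_of_ne h]; ring
end Etale

section Etale2
variable {k : Type*} [CommRing k] {n : ℕ}

lemma units_map_UB {C : Type*} [CommRing C] (F : AddMonoidAlgebra k (Fin n → ℤ) →+* C)
    (e : Fin n → ℤ) :
    F (AddMonoidAlgebra.single e 1) =
      ((Units.map F.toMonoidHom)
        ((AddMonoidAlgebra.of k (Fin n → ℤ)).toHomUnits (ofAdd e)) : C) := rfl

lemma single_eq_of_units {C : Type*} [CommRing C]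
    (F₁ F₂ : AddMonoidAlgebra k (Fin n → ℤ) →+* C)
    (h : ∀ i : Fin n,
      (Units.map F₁.toMonoidHom)
          ((AddMonoidAlgebra.of k (Fin n → ℤ)).toHomUnits (ofAdd (Pi.single i 1)))
        = (Units.map F₂.toMonoidHom)
          ((AddMonoidAlgebra.of k (Fin n → ℤ)).toHomUnits (ofAdd (Pi.single i 1))))
    (e : Fin n → ℤ) :
    F₁ (AddMonoidAlgebra.single e 1) = F₂ (AddMonoidAlgebra.single e 1) := by
  rw [units_map_UB F₁, units_map_UB F₂]
  congr 1
  have h1 := hom_eq_prod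
    ((Units.map F₁.toMonoidHom).comp ((AddMonoidAlgebra.of k (Fin n → ℤ)).toHomUnits)) e
  have h2 := hom_eq_prod
    ((Units.map F₂.toMonoidHom).comp ((AddMonoidAlgebra.of k (Fin n → ℤ)).toHomUnits)) e
  simp only [MonoidHom.comp_apply] at h1 h2
  rw [h1, h2]
  exact Finset.prod_congr rfl fun i _ => by rw [h i]

end Etale2

section Etale3
variable {k : Type*} [CommRing k] {n : ℕ}

lemma etale_aux (m : Fin n → ℕ) (hm : ∀ i, 0 < m i) (hmk : ∀ i, IsUnit ((m i : k)))
    (f : (Fin n → ℤ) →+ (Fin n → ℤ))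
    (hf : ∀ (e : Fin n → ℤ) (i : Fin n), f e i = (m i : ℤ) * e i) :
    (@Algebra.FormallyEtale (AddMonoidAlgebra k (Fin n → ℤ))
      (AddMonoidAlgebra k (Fin n → ℤ)) _ _
      ((AddMonoidAlgebra.mapDomainAlgHom k k f).toRingHom.toAlgebra)) := by
  letI alg : Algebra (AddMonoidAlgebra k (Fin n → ℤ)) (AddMonoidAlgebra k (Fin n → ℤ)) :=
    (AddMonoidAlgebra.mapDomainAlgHom k k f).toRingHom.toAlgebra
  refine Algebra.FormallyEtale.iff_comp_bijective.mpr ?_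
  intro C _ _ I hI
  have halgS : ∀ (e : Fin n → ℤ) (c : k),
      algebraMap (AddMonoidAlgebra k (Fin n → ℤ)) (AddMonoidAlgebra k (Fin n → ℤ))
        (AddMonoidAlgebra.single e c) = AddMonoidAlgebra.single (f e) c :=
    fun e c => phi_single' f e c
  letI : Algebra k C := ((algebraMap (AddMonoidAlgebra k (Fin n → ℤ)) C).comp
    (algebraMap k (AddMonoidAlgebra k (Fin n → ℤ)))).toAlgebra
  haveI : IsScalarTower k (AddMonoidAlgebra k (Fin n → ℤ)) C :=
    IsScalarTower.of_algebraMap_eq fun x => rfl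
  have hmC : ∀ i, IsUnit ((m i : ℕ) : C) := by
    intro i
    have h := (hmk i).map (algebraMap k C)
    rwa [map_natCast] at h
  have hpow_single : ∀ i : Fin n,
      (AddMonoidAlgebra.single (Pi.single i 1) (1:k)) ^ (m i)
        = AddMonoidAlgebra.single (f (Pi.single i 1)) (1:k) := by
    intro i
    rw [AddMonoidAlgebra.single_pow, one_pow, f_delta m f hf i]
  constructor
  · -- injectivity
    intro h₁ h₂ hcomp
    have key : ∀ i : Fin n,
        (Units.map (h₁ : AddMonoidAlgebra k (Fin n → ℤ) →+* C).toMonoidHom)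
          ((AddMonoidAlgebra.of k (Fin n → ℤ)).toHomUnits (ofAdd (Pi.single i 1)))
        = (Units.map (h₂ : AddMonoidAlgebra k (Fin n → ℤ) →+* C).toMonoidHom)
          ((AddMonoidAlgebra.of k (Fin n → ℤ)).toHomUnits (ofAdd (Pi.single i 1))) := by
      intro i
      refine hensel_unique I hI (m i) (hmC i) _ _ ?_ ?_
      · apply Units.ext
        rw [Units.val_pow_eq_pow_val, Units.val_pow_eq_pow_val]
        rw [show ((Units.map (h₁ : AddMonoidAlgebra k (Fin n → ℤ) →+* C).toMonoidHom)
          ((AddMonoidAlgebra.of k (Fin n → ℤ)).toHomUnits (ofAdd (Pi.single i 1))) : C)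
          = h₁ (AddMonoidAlgebra.single (Pi.single i 1) 1) from rfl]
        rw [show ((Units.map (h₂ : AddMonoidAlgebra k (Fin n → ℤ) →+* C).toMonoidHom)
          ((AddMonoidAlgebra.of k (Fin n → ℤ)).toHomUnits (ofAdd (Pi.single i 1))) : C)
          = h₂ (AddMonoidAlgebra.single (Pi.single i 1) 1) from rfl]
        rw [← map_pow, ← map_pow, hpow_single i, ← halgS, h₁.commutes, h₂.commutes]
      · have h := AlgHom.congr_fun hcomp (AddMonoidAlgebra.single (Pi.single i 1) 1)
        simpa [Ideal.Quotient.mkₐ_eq_mk] using h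
    have hsing : ∀ e : Fin n → ℤ,
        h₁ (AddMonoidAlgebra.single e (1:k)) = h₂ (AddMonoidAlgebra.single e (1:k)) :=
      single_eq_of_units (h₁ : AddMonoidAlgebra k (Fin n → ℤ) →+* C)
        (h₂ : AddMonoidAlgebra k (Fin n → ℤ) →+* C) key
    have hRH : (h₁ : AddMonoidAlgebra k (Fin n → ℤ) →+* C)
        = (h₂ : AddMonoidAlgebra k (Fin n → ℤ) →+* C) := by
      apply AddMonoidAlgebra.ringHom_ext
      · intro b
        have h00 : algebraMap (AddMonoidAlgebra k (Fin n → ℤ)) (AddMonoidAlgebra k (Fin n → ℤ))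
            (AddMonoidAlgebra.single (0 : Fin n → ℤ) b)
            = AddMonoidAlgebra.single (0 : Fin n → ℤ) b := by rw [halgS, map_zero]
        show h₁ (AddMonoidAlgebra.single (0 : Fin n → ℤ) b)
          = h₂ (AddMonoidAlgebra.single (0 : Fin n → ℤ) b)
        conv_lhs => rw [← h00]
        conv_rhs => rw [← h00]
        rw [h₁.commutes, h₂.commutes]
      · exact hsing
    exact AlgHom.ext fun x => RingHom.congr_fun hRH x
  · -- surjectivity
    intro g
    have hlift : ∀ i : Fin n, ∃ d : Cˣ,
        d ^ (m i) = (Units.map (algebraMap (AddMonoidAlgebra k (Fin n → ℤ)) C).toMonoidHom)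
            ((AddMonoidAlgebra.of k (Fin n → ℤ)).toHomUnits (ofAdd (Pi.single i 1)))
        ∧ Ideal.Quotient.mk I (d : C)
          = g (AddMonoidAlgebra.single (Pi.single i 1) 1) := by
      intro i
      obtain ⟨c, hc⟩ := unit_lift I hI
        ((Units.map (g : AddMonoidAlgebra k (Fin n → ℤ) →+* C ⧸ I).toMonoidHom)
          ((AddMonoidAlgebra.of k (Fin n → ℤ)).toHomUnits (ofAdd (Pi.single i 1))))
      have hyp : Ideal.Quotient.mk I ((c : C) ^ (m i))
          = Ideal.Quotient.mk I
            (((Units.map (algebraMap (AddMonoidAlgebra k (Fin n → ℤ)) C).toMonoidHom)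
              ((AddMonoidAlgebra.of k (Fin n → ℤ)).toHomUnits (ofAdd (Pi.single i 1)))) : C) := by
        rw [map_pow, hc]
        rw [show ((Units.map (g : AddMonoidAlgebra k (Fin n → ℤ) →+* C ⧸ I).toMonoidHom)
            ((AddMonoidAlgebra.of k (Fin n → ℤ)).toHomUnits (ofAdd (Pi.single i 1))) : C ⧸ I)
          = g (AddMonoidAlgebra.single (Pi.single i 1) 1) from rfl]
        rw [show ((Units.map (algebraMap (AddMonoidAlgebra k (Fin n → ℤ)) C).toMonoidHom)
            ((AddMonoidAlgebra.of k (Fin n → ℤ)).toHomUnits (ofAdd (Pi.single i 1))) : C)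
          = algebraMap (AddMonoidAlgebra k (Fin n → ℤ)) C
              (AddMonoidAlgebra.single (Pi.single i 1) 1) from rfl]
        have hmka : Ideal.Quotient.mk I (algebraMap (AddMonoidAlgebra k (Fin n → ℤ)) C
            (AddMonoidAlgebra.single (Pi.single i 1) 1))
            = algebraMap (AddMonoidAlgebra k (Fin n → ℤ)) (C ⧸ I)
              (AddMonoidAlgebra.single (Pi.single i 1) 1) := by
          have := (Ideal.Quotient.mkₐ (AddMonoidAlgebra k (Fin n → ℤ)) I).commutes
            (AddMonoidAlgebra.single (Pi.single i 1) 1)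
          simpa [Ideal.Quotient.mkₐ_eq_mk] using this
        rw [hmka, ← g.commutes, halgS, ← hpow_single i, map_pow]
      obtain ⟨d, hd1, hd2⟩ := hensel_exists I hI (m i) (hmC i) _ c hyp
      refine ⟨d, hd1, ?_⟩
      rw [hd2, hc]
      exact (units_map_UB (g : AddMonoidAlgebra k (Fin n → ℤ) →+* C ⧸ I) _).symm
    choose dU hd1 hd2 using hlift
    let Dmon : Multiplicative (Fin n → ℤ) →* Cˣ :=
    { toFun := fun x => ∏ i, (dU i) ^ ((Multiplicative.toAdd x) i)
      map_one' := by
        refine Finset.prod_eq_one fun i _ => ?_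
        show dU i ^ ((0 : Fin n → ℤ) i) = 1
        rw [Pi.zero_apply, zpow_zero]
      map_mul' := fun x y => by
        show (∏ i, dU i ^ ((Multiplicative.toAdd (x * y)) i))
          = (∏ i, dU i ^ ((Multiplicative.toAdd x) i)) * ∏ i, dU i ^ ((Multiplicative.toAdd y) i)
        rw [← Finset.prod_mul_distrib]
        refine Finset.prod_congr rfl fun i _ => ?_
        rw [show (Multiplicative.toAdd (x * y)) i
          = Multiplicative.toAdd x i + Multiplicative.toAdd y i from rfl, zpow_add] }
    let h0 : AddMonoidAlgebra k (Fin n → ℤ) →ₐ[k] C :=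
      (AddMonoidAlgebra.lift k C (Fin n → ℤ)) ((Units.coeHom C).comp Dmon)
    have h0single : ∀ e : Fin n → ℤ,
        h0 (AddMonoidAlgebra.single e 1) = ((Dmon (ofAdd e)) : C) := by
      intro e
      show (AddMonoidAlgebra.lift k C (Fin n → ℤ)) ((Units.coeHom C).comp Dmon)
        (AddMonoidAlgebra.single e 1) = _
      rw [AddMonoidAlgebra.lift_single, one_smul]
      rfl
    have Dmon_delta : ∀ i : Fin n, Dmon (ofAdd (Pi.single i 1)) = dU i := by
      intro i
      show (∏ j, dU j ^ ((Pi.single i 1 : Fin n → ℤ) j)) = dU i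
      rw [Finset.prod_eq_single i (fun j _ hj => by rw [Pi.single_eq_of_ne hj, zpow_zero])
        (fun hi => absurd (Finset.mem_univ i) hi)]
      rw [Pi.single_eq_same, zpow_one]
    have Dmon_f : ∀ e : Fin n → ℤ, Dmon (ofAdd (f e))
        = (Units.map (algebraMap (AddMonoidAlgebra k (Fin n → ℤ)) C).toMonoidHom)
            ((AddMonoidAlgebra.of k (Fin n → ℤ)).toHomUnits (ofAdd e)) := by
      intro e
      have h2 := hom_eq_prod ((Units.map (algebraMap (AddMonoidAlgebra k (Fin n → ℤ))
        C).toMonoidHom).comp ((AddMonoidAlgebra.of k (Fin n → ℤ)).toHomUnits)) e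
      simp only [MonoidHom.comp_apply] at h2
      rw [show Dmon (ofAdd (f e)) = ∏ i, (dU i) ^ ((f e) i) from rfl, h2]
      refine Finset.prod_congr rfl fun i _ => ?_
      rw [hf e i, zpow_mul, zpow_natCast, hd1 i]
    have hcomm : ∀ x : AddMonoidAlgebra k (Fin n → ℤ),
        h0 (algebraMap (AddMonoidAlgebra k (Fin n → ℤ)) (AddMonoidAlgebra k (Fin n → ℤ)) x)
          = algebraMap (AddMonoidAlgebra k (Fin n → ℤ)) C x := by
      have hAB : h0.comp (AddMonoidAlgebra.mapDomainAlgHom k k f)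
          = IsScalarTower.toAlgHom k (AddMonoidAlgebra k (Fin n → ℤ)) C := by
        refine AddMonoidAlgebra.algHom_ext ?_ (Subsingleton.elim _ _)
        intro e
        show h0 ((AddMonoidAlgebra.mapDomainAlgHom k k f) (AddMonoidAlgebra.single e 1))
          = algebraMap (AddMonoidAlgebra k (Fin n → ℤ)) C (AddMonoidAlgebra.single e 1)
        rw [phi_single', h0single, Dmon_f e]
        exact (units_map_UB (algebraMap (AddMonoidAlgebra k (Fin n → ℤ)) C) e).symm
      intro x
      exact AlgHom.congr_fun hAB x
    refine ⟨{ toRingHom := (h0 : AddMonoidAlgebra k (Fin n → ℤ) →+* C), commutes' := hcomm }, ?_⟩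
    set H : AddMonoidAlgebra k (Fin n → ℤ) →ₐ[AddMonoidAlgebra k (Fin n → ℤ)] C :=
      { toRingHom := (h0 : AddMonoidAlgebra k (Fin n → ℤ) →+* C), commutes' := hcomm } with hH
    have hRH : ((Ideal.Quotient.mkₐ (AddMonoidAlgebra k (Fin n → ℤ)) I).comp H
          : AddMonoidAlgebra k (Fin n → ℤ) →+* C ⧸ I)
        = (g : AddMonoidAlgebra k (Fin n → ℤ) →+* C ⧸ I) := by
      apply AddMonoidAlgebra.ringHom_ext
      · intro b
        have h00 : algebraMap (AddMonoidAlgebra k (Fin n → ℤ)) (AddMonoidAlgebra k (Fin n → ℤ))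
            (AddMonoidAlgebra.single (0 : Fin n → ℤ) b)
            = AddMonoidAlgebra.single (0 : Fin n → ℤ) b := by rw [halgS, map_zero]
        show (Ideal.Quotient.mkₐ (AddMonoidAlgebra k (Fin n → ℤ)) I)
            (H (AddMonoidAlgebra.single (0 : Fin n → ℤ) b))
          = g (AddMonoidAlgebra.single (0 : Fin n → ℤ) b)
        conv_lhs => rw [← h00]
        conv_rhs => rw [← h00]
        rw [H.commutes, (Ideal.Quotient.mkₐ (AddMonoidAlgebra k (Fin n → ℤ)) I).commutes,
          g.commutes]
      · intro e
        show Ideal.Quotient.mk I (H (AddMonoidAlgebra.single e 1))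
          = g (AddMonoidAlgebra.single e 1)
        have hH1 : H (AddMonoidAlgebra.single e 1) = ((Dmon (ofAdd e)) : C) := h0single e
        rw [hH1]
        have hu : (Units.map (Ideal.Quotient.mk I).toMonoidHom) (Dmon (ofAdd e))
            = (Units.map (g : AddMonoidAlgebra k (Fin n → ℤ) →+* C ⧸ I).toMonoidHom)
                ((AddMonoidAlgebra.of k (Fin n → ℤ)).toHomUnits (ofAdd e)) := by
          have e1 := hom_eq_prod
            ((Units.map (Ideal.Quotient.mk I).toMonoidHom).comp Dmon) e
          have e2 := hom_eq_prod
            ((Units.map (g : AddMonoidAlgebra k (Fin n → ℤ) →+* C ⧸ I).toMonoidHom).comp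
              ((AddMonoidAlgebra.of k (Fin n → ℤ)).toHomUnits)) e
          simp only [MonoidHom.comp_apply] at e1 e2
          rw [e1, e2]
          refine Finset.prod_congr rfl fun i _ => ?_
          congr 1
          apply Units.ext
          show Ideal.Quotient.mk I ((Dmon (ofAdd (Pi.single i 1)) : C)) = _
          rw [Dmon_delta i, hd2 i]
          exact units_map_UB (g : AddMonoidAlgebra k (Fin n → ℤ) →+* C ⧸ I) _
        exact congrArg Units.val hu
    exact AlgHom.ext fun x => RingHom.congr_fun hRH x

end Etale3

/-- Let `k` be a commutative ring and `m₁, …, mₙ` positive integers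
invertible in `k`.  Let `S = k[u₁^{±1}, …, uₙ^{±1}]` be the Laurent polynomial ring in
`n` variables over `k`, i.e. the group algebra of `ℤⁿ` over `k`, and let `φ : S → S` be
the `k`-algebra endomorphism induced by the group endomorphism of `ℤⁿ` multiplying the
`i`-th coordinate by `mᵢ` (so `φ(uᵢ) = uᵢ^{mᵢ}`).  Then `S`, regarded as an algebra
over itself via `φ`, is faithfully flat and formally étale. -/
theorem laurent_root_extension_faithfullyFlat_formallyEtale
    (k : Type*) [CommRing k] (n : ℕ) (hn : 1 ≤ n)
    (m : Fin n → ℕ) (hm : ∀ i, 0 < m i) (hmk : ∀ i, IsUnit ((m i : k)))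
    (f : (Fin n → ℤ) →+ (Fin n → ℤ))
    (hf : ∀ (e : Fin n → ℤ) (i : Fin n), f e i = (m i : ℤ) * e i) :
    (@Module.FaithfullyFlat (AddMonoidAlgebra k (Fin n → ℤ)) (AddMonoidAlgebra k (Fin n → ℤ))
      _ _ (@Algebra.toModule _ _ _ _
        ((AddMonoidAlgebra.mapDomainAlgHom k k f).toRingHom.toAlgebra))) ∧
    (@Algebra.FormallyEtale (AddMonoidAlgebra k (Fin n → ℤ))
      (AddMonoidAlgebra k (Fin n → ℤ)) _ _
      ((AddMonoidAlgebra.mapDomainAlgHom k k f).toRingHom.toAlgebra)) := by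
  exact ⟨flat_aux m hm f hf, etale_aux m hm hmk f hf⟩
end

section
/- Let k be a field, n ≥ 1, and m₁, …, mₙ positive integers invertible in k such that k contains a primitive mᵢ-th root of unity ζᵢ for each i. Let g be a Lie algebra over k with pairwise commuting k-Lie algebra automorphisms σ₁, …, σₙ satisfying σᵢ^{mᵢ} = id. Let S = k[u₁^{±1}, …, uₙ^{±1}], let R ⊆ S be the k-subalgebra k[u₁^{±m₁}, …, uₙ^{±mₙ}], and for each i let γᵢ be the k-algebra automorphism of S with γᵢ(uᵢ) = ζᵢ^{-1} uᵢ and γᵢ(u_j) = u_j for j ≠ i. Define the multiloop algebra L(g, σ) = {x ∈ g ⊗_k S : (σᵢ ⊗ γᵢ)(x) = x for all i}, a Lie algebra over R. Then the S-linear map L(g, σ) ⊗_R S → g ⊗_k S induced by (x, s) ↦ s • x is an isomorphism of Lie algebras over S. -/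
open TensorProduct

set_option maxSynthPendingDepth 3
set_option synthInstance.maxHeartbeats 1000000

/-- The endomorphism of `ℤⁿ` multiplying the `i`-th coordinate by `mᵢ`
(inducing `uᵢ ↦ uᵢ^{mᵢ}` on the Laurent polynomial ring). -/
def expMulHom {n : ℕ} (m : Fin n → ℕ) : (Fin n → ℤ) →+ (Fin n → ℤ) where
  toFun e := fun i => (m i : ℤ) * e i
  map_zero' := by ext i; simp
  map_add' a b := by ext i; simp [mul_add]

/-- The subring `R = k[u₁^{±m₁}, …, uₙ^{±mₙ}]` of the Laurent polynomial ring
`S = k[u₁^{±1}, …, uₙ^{±1}]` (realised as the group algebra of `ℤⁿ`), namely the image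
of `S` under the `k`-algebra map `uᵢ ↦ uᵢ^{mᵢ}`. -/
noncomputable def multiloopBase (k : Type*) [CommRing k] (n : ℕ) (m : Fin n → ℕ) :
    Subalgebra k (AddMonoidAlgebra k (Fin n → ℤ)) :=
  (AddMonoidAlgebra.mapDomainAlgHom k k (expMulHom m)).range

set_option maxHeartbeats 4000000

section auxiliary

variable {k : Type*} [Field k]


lemma geom_sum_root_zero {w : k} {M : ℕ} (hw : w ^ M = 1) (h1 : w ≠ 1) :
    ∑ j ∈ Finset.range M, w ^ j = 0 := by
  have h := geom_sum_mul w M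
  rw [hw, sub_self] at h
  rcases mul_eq_zero.mp h with h | h
  · exact h
  · exact absurd (sub_eq_zero.mp h) h1

lemma char_sum {ζ : k} {M : ℕ} (hζ : IsPrimitiveRoot ζ M) (hM : 0 < M)
    (c d : ℕ) (hc : c < M) (hd : d < M) :
    ∑ j ∈ Finset.range M, (ζ ^ c * (ζ ^ d)⁻¹) ^ j = if c = d then (M : k) else 0 := by
  have hζ0 : ζ ≠ 0 := hζ.ne_zero hM.ne'
  by_cases h : c = d
  · subst h
    rw [mul_inv_cancel₀ (pow_ne_zero _ hζ0), if_pos rfl]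
    simp
  · rw [if_neg h]
    apply geom_sum_root_zero
    · rw [mul_pow, ← pow_mul, mul_comm c M, pow_mul, hζ.pow_eq_one, one_pow,
        ← inv_pow, ← pow_mul, mul_comm d M, pow_mul, inv_pow, hζ.pow_eq_one, inv_one, one_pow, one_mul]
    · intro hw
      rw [mul_inv_eq_one₀ (pow_ne_zero _ hζ0)] at hw
      exact h (hζ.pow_inj hc hd hw)

lemma eigen_indep {V : Type*} [AddCommGroup V] [Module k V]
    {n : ℕ} (m : Fin n → ℕ) (hm : ∀ i, 0 < m i) (hmk : ∀ i, ((m i : k) ≠ 0))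
    (ζ : Fin n → k) (hζ : ∀ i, IsPrimitiveRoot (ζ i) (m i))
    (T : Fin n → (V →ₗ[k] V))
    (z : (Fin n → ℕ) → V)
    (hz : ∀ f ∈ Fintype.piFinset (fun i => Finset.range (m i)), ∀ i,
        T i (z f) = (ζ i ^ (f i))⁻¹ • z f)
    (hsum : ∑ f ∈ Fintype.piFinset (fun i => Finset.range (m i)), z f = 0) :
    ∀ f ∈ Fintype.piFinset (fun i => Finset.range (m i)), z f = 0 := by
  intro f₀ hf₀
  set B := Fintype.piFinset (fun i => Finset.range (m i)) with hB
  have claim : ∀ s : Finset (Fin n),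
      ∑ f ∈ B.filter (fun f => ∀ i ∈ s, f i = f₀ i), z f = 0 := by
    intro s
    induction s using Finset.induction_on with
    | empty => simpa using hsum
    | @insert i s his ih =>
      -- the projector onto the `f₀ i`-eigenvalue of `T i`
      set P : V →ₗ[k] V :=
        (m i : k)⁻¹ • (∑ j ∈ Finset.range (m i), (ζ i ^ (f₀ i)) ^ j • (T i ^ j)) with hP
      have hTpow : ∀ f ∈ B, ∀ j : ℕ, (T i ^ j) (z f) = ((ζ i ^ (f i))⁻¹) ^ j • z f := by
        intro f hf j
        induction j with
        | zero => simp
        | succ j hj =>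
          rw [pow_succ', Module.End.mul_apply, hj, map_smul, hz f hf i, smul_smul,
            pow_succ, mul_comm]
      have hPz : ∀ f ∈ B, P (z f) = if f i = f₀ i then z f else 0 := by
        intro f hf
        have hfi : f i < m i := by
          rw [hB, Fintype.mem_piFinset] at hf
          simpa using hf i
        have hf₀i : f₀ i < m i := by
          rw [hB, Fintype.mem_piFinset] at hf₀
          simpa using hf₀ i
        rw [hP]
        simp only [LinearMap.smul_apply, LinearMap.sum_apply]
        have : ∀ j ∈ Finset.range (m i), (ζ i ^ (f₀ i)) ^ j • (T i ^ j) (z f)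
            = ((ζ i ^ (f₀ i) * (ζ i ^ (f i))⁻¹) ^ j) • z f := by
          intro j hj
          rw [hTpow f hf j, ← mul_smul, ← mul_pow]
        rw [Finset.sum_congr rfl this, ← Finset.sum_smul,
          char_sum (hζ i) (hm i) _ _ hf₀i hfi]
        by_cases h : f₀ i = f i
        · rw [if_pos h, if_pos h.symm, smul_smul, inv_mul_cancel₀ (hmk i), one_smul]
        · rw [if_neg h, if_neg (fun hh => h hh.symm), zero_smul, smul_zero]
      have h0 : P (∑ f ∈ B.filter (fun f => ∀ j ∈ s, f j = f₀ j), z f) = 0 := by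
        rw [ih, map_zero]
      rw [map_sum] at h0
      have h1 : ∀ f ∈ B.filter (fun f => ∀ j ∈ s, f j = f₀ j),
          P (z f) = if f i = f₀ i then z f else 0 :=
        fun f hf => hPz f (Finset.mem_of_mem_filter _ hf)
      rw [Finset.sum_congr rfl h1, ← Finset.sum_filter, Finset.filter_filter] at h0
      rw [← h0]
      apply Finset.sum_congr _ (fun _ _ => rfl)
      ext f
      simp only [Finset.mem_filter, Finset.forall_mem_insert, and_assoc]
      tauto
  have := claim Finset.univ
  have hfilter : B.filter (fun f => ∀ i ∈ Finset.univ, f i = f₀ i) = {f₀} := by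
    ext f
    simp only [Finset.mem_filter, Finset.mem_singleton, Finset.mem_univ, forall_true_left]
    constructor
    · rintro ⟨_, h⟩; exact funext h
    · rintro rfl; exact ⟨hf₀, fun _ => rfl⟩
  rw [hfilter, Finset.sum_singleton] at this
  exact this

lemma eigen_span {g : Type*} [AddCommGroup g] [Module k g]
    {n : ℕ} (m : Fin n → ℕ) (hm : ∀ i, 0 < m i) (hmk : ∀ i, ((m i : k) ≠ 0))
    (ζ : Fin n → k) (hζ : ∀ i, IsPrimitiveRoot (ζ i) (m i))
    (σ : Fin n → (g →ₗ[k] g))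
    (hσcomm : ∀ i j x, σ i (σ j x) = σ j (σ i x))
    (hσord : ∀ i (x : g), ((σ i) ^ (m i)) x = x) (x : g) :
    x ∈ Submodule.span k {y : g | ∀ i, ∃ c : ℕ, c < m i ∧ σ i y = ζ i ^ c • y} := by
  suffices h : ∀ s : Finset (Fin n), ∀ x : g,
      x ∈ Submodule.span k {y : g | ∀ i ∈ s, ∃ c : ℕ, c < m i ∧ σ i y = ζ i ^ c • y} by
    have h2 := h Finset.univ x
    have he : {y : g | ∀ i ∈ Finset.univ, ∃ c : ℕ, c < m i ∧ σ i y = ζ i ^ c • y}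
        = {y : g | ∀ i, ∃ c : ℕ, c < m i ∧ σ i y = ζ i ^ c • y} := by
      ext y; simp
    rwa [he] at h2
  intro s
  induction s using Finset.induction_on with
  | empty =>
    intro x
    exact Submodule.subset_span (by simp)
  | @insert i s his ih =>
    intro x
    refine Submodule.span_le.mpr ?_ (ih x)
    intro y hy
    have hζi0 : ζ i ≠ 0 := (hζ i).ne_zero (hm i).ne'
    set q : ℕ → g := fun c =>
      (m i : k)⁻¹ • ∑ j ∈ Finset.range (m i), ((ζ i ^ c)⁻¹) ^ j • (σ i ^ j) y with hq
    -- each q c is a ζ i ^ c eigenvector for σ i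
    have hmain : ∀ c : ℕ, σ i (q c) = ζ i ^ c • q c := by
      intro c
      have hζ0 : ζ i ^ c ≠ 0 := pow_ne_zero _ hζi0
      set F : ℕ → g := fun j => ((ζ i ^ c)⁻¹) ^ j • (σ i ^ j) y with hF
      have hstep : ∀ j, σ i (F j) = ζ i ^ c • F (j + 1) := by
        intro j
        have e1 : σ i ((σ i ^ j) y) = (σ i ^ (j + 1)) y := by
          rw [pow_succ', Module.End.mul_apply]
        show σ i (((ζ i ^ c)⁻¹) ^ j • (σ i ^ j) y)
            = ζ i ^ c • (((ζ i ^ c)⁻¹) ^ (j + 1) • (σ i ^ (j + 1)) y)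
        rw [map_smul, e1, smul_smul, pow_succ' ((ζ i ^ c)⁻¹) j, ← mul_assoc,
          mul_inv_cancel₀ hζ0, one_mul]
      have hFM : F (m i) = F 0 := by
        show ((ζ i ^ c)⁻¹) ^ (m i) • (σ i ^ (m i)) y = ((ζ i ^ c)⁻¹) ^ 0 • (σ i ^ 0) y
        rw [hσord i y, inv_pow, ← pow_mul, mul_comm c (m i), pow_mul,
          (hζ i).pow_eq_one, one_pow, inv_one, one_smul, pow_zero, one_smul, pow_zero,
          Module.End.one_apply]
      have hshift : ∑ j ∈ Finset.range (m i), F (j + 1) = ∑ j ∈ Finset.range (m i), F j := by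
        have h1 := Finset.sum_range_succ' F (m i)
        have h2 := Finset.sum_range_succ F (m i)
        rw [h2, hFM] at h1
        exact add_right_cancel h1.symm
      show σ i ((m i : k)⁻¹ • ∑ j ∈ Finset.range (m i), F j)
          = ζ i ^ c • ((m i : k)⁻¹ • ∑ j ∈ Finset.range (m i), F j)
      rw [map_smul, map_sum, Finset.sum_congr rfl (fun j _ => hstep j),
        ← Finset.smul_sum, hshift, smul_comm]
    -- the q c sum back to y
    have hsum : ∑ c ∈ Finset.range (m i), q c = y := by
      rw [hq]
      simp only
      rw [← Finset.smul_sum, Finset.sum_comm]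
      have hterm : ∀ j ∈ Finset.range (m i),
          ∑ c ∈ Finset.range (m i), ((ζ i ^ c)⁻¹) ^ j • (σ i ^ j) y
            = (if 0 = j then (m i : k) else 0) • (σ i ^ j) y := by
        intro j hj
        rw [← Finset.sum_smul, ← char_sum (hζ i) (hm i) 0 j (hm i) (Finset.mem_range.mp hj)]
        congr 1
        apply Finset.sum_congr rfl
        intro c _
        rw [pow_zero, one_mul, ← inv_pow, ← inv_pow, ← pow_mul, ← pow_mul, mul_comm c j]
      rw [Finset.sum_congr rfl hterm,
        Finset.sum_eq_single_of_mem 0 (Finset.mem_range.mpr (hm i))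
          (fun j _ hj0 => by rw [if_neg (fun h => hj0 h.symm), zero_smul]),
        if_pos rfl, pow_zero, Module.End.one_apply, smul_smul, inv_mul_cancel₀ (hmk i),
        one_smul]
    -- q c is still an eigenvector for the old indices
    have hcommpow : ∀ (j' : Fin n) (t : ℕ) (v : g), σ j' ((σ i ^ t) v) = (σ i ^ t) (σ j' v) := by
      intro j' t
      induction t with
      | zero => intro v; simp
      | succ t ihx =>
        intro v
        rw [pow_succ, Module.End.mul_apply, Module.End.mul_apply, ihx (σ i v),
          hσcomm j' i v]
    have hmem : ∀ c, c < m i →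
        q c ∈ {y : g | ∀ i' ∈ insert i s, ∃ c' : ℕ, c' < m i' ∧ σ i' y = ζ i' ^ c' • y} := by
      intro c hc i' hi'
      rcases Finset.mem_insert.mp hi' with rfl | hi's
      · exact ⟨c, hc, hmain c⟩
      · obtain ⟨c', hc', heig⟩ := hy i' hi's
        refine ⟨c', hc', ?_⟩
        rw [hq]
        simp only
        rw [map_smul, map_sum]
        rw [Finset.sum_congr rfl (fun j _ => by
          rw [map_smul, hcommpow i' j y, heig, map_smul, smul_comm (((ζ i ^ c)⁻¹) ^ j)]),
          ← Finset.smul_sum, smul_comm]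
    rw [← hsum]
    exact Submodule.sum_mem _ (fun c hc =>
      Submodule.subset_span (hmem c (Finset.mem_range.mp hc)))

end auxiliary

/-- Multiloop algebras are twisted forms: with
`S = k[u₁^{±1}, …, uₙ^{±1}]`, `R = k[u₁^{±m₁}, …, uₙ^{±mₙ}]`, commuting automorphisms
`σᵢ` of `g` with `σᵢ^{mᵢ} = 1`, and `γᵢ` the `k`-algebra automorphism of `S` scaling
`uᵢ` by `ζᵢ⁻¹`, let `L(g, σ) ⊆ S ⊗[k] g` be the simultaneous fixed points of the
`γᵢ ⊗ σᵢ` (a Lie algebra over `R`, here presented by a Lie algebra `Lu` over `R`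
identified with the fixed-point set via `ι`).  Then the `S`-linear map
`L(g,σ) ⊗[R] S → g ⊗[k] S` induced by `(x, s) ↦ s • x` is an isomorphism of Lie
algebras over `S`. -/
theorem multiloop_trivialized_by_baseChange
    (k : Type*) [Field k] (n : ℕ) (hn : 1 ≤ n)
    (m : Fin n → ℕ) (hm : ∀ i, 0 < m i) (hmk : ∀ i, ((m i : k) ≠ 0))
    (ζ : Fin n → k) (hζ : ∀ i, IsPrimitiveRoot (ζ i) (m i))
    (g : Type*) [LieRing g] [LieAlgebra k g]
    (σ : Fin n → (g ≃ₗ⁅k⁆ g))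
    (hσcomm : ∀ i j (x : g), σ i (σ j x) = σ j (σ i x))
    (hσord : ∀ i (x : g), (⇑(σ i))^[m i] x = x)
    (γ : Fin n → (AddMonoidAlgebra k (Fin n → ℤ) ≃ₐ[k] AddMonoidAlgebra k (Fin n → ℤ)))
    (hγ : ∀ i (e : Fin n → ℤ),
      γ i (AddMonoidAlgebra.single e (1 : k)) =
        (ζ i ^ (-(e i))) • AddMonoidAlgebra.single e (1 : k))
    (Lu : Type*) [LieRing Lu] [LieAlgebra ↥(multiloopBase k n m) Lu]
    (ι : Lu →ₗ[↥(multiloopBase k n m)] ((AddMonoidAlgebra k (Fin n → ℤ)) ⊗[k] g))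
    (hι_inj : Function.Injective ι)
    (hι_lie : ∀ x y : Lu, ι ⁅x, y⁆ = ⁅ι x, ι y⁆)
    (hι_range : ∀ y : (AddMonoidAlgebra k (Fin n → ℤ)) ⊗[k] g,
      (∃ x : Lu, ι x = y) ↔
        ∀ i, TensorProduct.map (γ i).toLinearMap (σ i).toLieHom.toLinearMap y = y) :
    Function.Bijective (LinearMap.liftBaseChange (AddMonoidAlgebra k (Fin n → ℤ)) ι) ∧
      ∀ a b : (AddMonoidAlgebra k (Fin n → ℤ)) ⊗[↥(multiloopBase k n m)] Lu,
        LinearMap.liftBaseChange (AddMonoidAlgebra k (Fin n → ℤ)) ι ⁅a, b⁆ =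
          ⁅LinearMap.liftBaseChange (AddMonoidAlgebra k (Fin n → ℤ)) ι a,
            LinearMap.liftBaseChange (AddMonoidAlgebra k (Fin n → ℤ)) ι b⁆ := by
  classical
  set B : Finset (Fin n → ℕ) := Fintype.piFinset (fun i => Finset.range (m i)) with hBdef
  set T : Fin n → ((AddMonoidAlgebra k (Fin n → ℤ)) ⊗[k] g →ₗ[k] (AddMonoidAlgebra k (Fin n → ℤ)) ⊗[k] g) :=
    fun i => TensorProduct.map (γ i).toLinearMap (σ i).toLieHom.toLinearMap with hTdef
  have hζ0 : ∀ i, ζ i ≠ 0 := fun i => (hζ i).ne_zero (hm i).ne'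
  have humul : ∀ e e' : Fin n → ℤ,
      AddMonoidAlgebra.single e (1 : k) * AddMonoidAlgebra.single e' (1 : k)
        = AddMonoidAlgebra.single (e + e') (1 : k) := by
    intro e e'
    rw [AddMonoidAlgebra.single_mul_single, one_mul]
  have huinv : ∀ e : Fin n → ℤ,
      AddMonoidAlgebra.single (-e) (1 : k) * AddMonoidAlgebra.single e (1 : k) = 1 := by
    intro e
    rw [humul, neg_add_cancel, AddMonoidAlgebra.one_def]
  have hTsemi : ∀ (i) (s : (AddMonoidAlgebra k (Fin n → ℤ))) (v : (AddMonoidAlgebra k (Fin n → ℤ)) ⊗[k] g), T i (s • v) = γ i s • T i v := by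
    intro i s v
    induction v using TensorProduct.induction_on with
    | zero => simp
    | tmul t x =>
      rw [TensorProduct.smul_tmul', smul_eq_mul, hTdef]
      simp only [TensorProduct.map_tmul, AlgEquiv.toLinearMap_apply, map_mul]
      rw [TensorProduct.smul_tmul', smul_eq_mul]
    | add v w hv hw => rw [smul_add, map_add, map_add, hv, hw, smul_add]
  have hsingle1 : ∀ e : Fin n → ℤ, ∃ (r : ↥(multiloopBase k n m)) (f₀ : Fin n → ℕ), f₀ ∈ B ∧
      (AddMonoidAlgebra.single e (1 : k) : (AddMonoidAlgebra k (Fin n → ℤ)))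
        = r • AddMonoidAlgebra.single (fun i => ((f₀ i : ℕ) : ℤ)) (1 : k) := by
    intro e
    set f₀ : Fin n → ℕ := fun i => ((e i) % (m i : ℤ)).toNat with hf₀def
    set q : Fin n → ℤ := fun i => (e i) / (m i : ℤ) with hqdef
    have hmemod : ∀ i, 0 ≤ e i % (m i : ℤ) ∧ e i % (m i : ℤ) < (m i : ℤ) := by
      intro i
      have h0 : ((m i : ℤ)) ≠ 0 := by exact_mod_cast (hm i).ne'
      exact ⟨Int.emod_nonneg _ h0, Int.emod_lt_of_pos _ (by exact_mod_cast hm i)⟩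
    have hf₀B : f₀ ∈ B := by
      rw [hBdef, Fintype.mem_piFinset]
      intro i
      rw [Finset.mem_range]
      show ((e i) % (m i : ℤ)).toNat < m i
      have := hmemod i
      omega
    have hcoe : ∀ i, ((f₀ i : ℕ) : ℤ) = e i % (m i : ℤ) := by
      intro i
      exact Int.toNat_of_nonneg (hmemod i).1
    have hsplit : (fun i => (m i : ℤ) * q i) + (fun i => ((f₀ i : ℕ) : ℤ)) = e := by
      funext i
      simp only [Pi.add_apply, hcoe i, hqdef]
      exact Int.mul_ediv_add_emod (e i) (m i : ℤ)
    have hrmem : (AddMonoidAlgebra.single (fun i => (m i : ℤ) * q i) (1 : k) : (AddMonoidAlgebra k (Fin n → ℤ)))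
        ∈ multiloopBase k n m := by
      refine (AlgHom.mem_range _).mpr ⟨AddMonoidAlgebra.single q (1 : k), ?_⟩
      rw [AddMonoidAlgebra.mapDomainAlgHom_apply, AddMonoidAlgebra.mapDomain_single]
      rfl
    refine ⟨⟨_, hrmem⟩, f₀, hf₀B, ?_⟩
    rw [Algebra.smul_def]
    show AddMonoidAlgebra.single e (1 : k)
        = (AddMonoidAlgebra.single (fun i => (m i : ℤ) * q i) (1 : k) : (AddMonoidAlgebra k (Fin n → ℤ)))
          * AddMonoidAlgebra.single (fun i => ((f₀ i : ℕ) : ℤ)) (1 : k)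
    rw [AddMonoidAlgebra.single_mul_single, mul_one, hsplit]
  have hrep : ∀ z : (AddMonoidAlgebra k (Fin n → ℤ)) ⊗[↥(multiloopBase k n m)] Lu, ∃ x : (Fin n → ℕ) → Lu,
      z = ∑ f ∈ B, (AddMonoidAlgebra.single (fun i => ((f i : ℕ) : ℤ)) (1 : k)) ⊗ₜ[↥(multiloopBase k n m)] x f := by
    have htmul : ∀ s : (AddMonoidAlgebra k (Fin n → ℤ)), ∀ l : Lu, ∃ x : (Fin n → ℕ) → Lu,
        s ⊗ₜ[↥(multiloopBase k n m)] l
          = ∑ f ∈ B, (AddMonoidAlgebra.single (fun i => ((f i : ℕ) : ℤ)) (1 : k)) ⊗ₜ[↥(multiloopBase k n m)] x f := by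
      intro s
      induction s using AddMonoidAlgebra.induction_on with
      | of e =>
        intro l
        obtain ⟨r, f₀, hf₀B, hsplit⟩ := hsingle1 e
        refine ⟨Pi.single f₀ (r • l), ?_⟩
        rw [AddMonoidAlgebra.of_apply, toAdd_ofAdd, hsplit,
          TensorProduct.smul_tmul]
        rw [Finset.sum_eq_single_of_mem f₀ hf₀B]
        · rw [Pi.single_eq_same]
        · intro f _ hf
          rw [Pi.single_eq_of_ne hf, TensorProduct.tmul_zero]
      | add s t hs ht =>
        intro l
        obtain ⟨x1, hx1⟩ := hs l
        obtain ⟨x2, hx2⟩ := ht l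
        refine ⟨x1 + x2, ?_⟩
        rw [TensorProduct.add_tmul, hx1, hx2, ← Finset.sum_add_distrib]
        apply Finset.sum_congr rfl
        intro f _
        rw [Pi.add_apply, TensorProduct.tmul_add]
      | smul a s hs =>
        intro l
        obtain ⟨x1, hx1⟩ := hs ((algebraMap k ↥(multiloopBase k n m) a) • l)
        refine ⟨x1, ?_⟩
        rw [← IsScalarTower.algebraMap_smul ↥(multiloopBase k n m) a s,
          TensorProduct.smul_tmul, hx1]
    intro z
    induction z using TensorProduct.induction_on with
    | zero => exact ⟨0, by simp [TensorProduct.tmul_zero]⟩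
    | tmul s l => exact htmul s l
    | add z w hz hw =>
      obtain ⟨x1, hx1⟩ := hz
      obtain ⟨x2, hx2⟩ := hw
      refine ⟨x1 + x2, ?_⟩
      rw [hx1, hx2, ← Finset.sum_add_distrib]
      apply Finset.sum_congr rfl
      intro f _
      rw [Pi.add_apply, TensorProduct.tmul_add]
  have hker : ∀ z : (AddMonoidAlgebra k (Fin n → ℤ)) ⊗[↥(multiloopBase k n m)] Lu, (LinearMap.liftBaseChange (AddMonoidAlgebra k (Fin n → ℤ)) ι) z = 0 → z = 0 := by
    intro z hz
    obtain ⟨x, rfl⟩ := hrep z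
    set z' : (Fin n → ℕ) → ((AddMonoidAlgebra k (Fin n → ℤ)) ⊗[k] g) := fun f =>
      (AddMonoidAlgebra.single (fun i => ((f i : ℕ) : ℤ)) (1 : k)) • ι (x f) with hz'def
    have hFz : ∑ f ∈ B, z' f = 0 := by
      rw [← hz, map_sum]
      apply Finset.sum_congr rfl
      intro f _
      rw [LinearMap.liftBaseChange_tmul]
    have heig : ∀ f ∈ B, ∀ i, T i (z' f) = (ζ i ^ (f i))⁻¹ • z' f := by
      intro f hf i
      have hfixf : T i (ι (x f)) = ι (x f) := (hι_range (ι (x f))).mp ⟨x f, rfl⟩ i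
      rw [hz'def]
      simp only
      rw [hTsemi i _ (ι (x f)), hfixf, hγ i (fun i => ((f i : ℕ) : ℤ)), smul_assoc]
      congr 1
      rw [zpow_neg, zpow_natCast]
    have hzero := eigen_indep m hm hmk ζ hζ T z' heig hFz
    have hx0 : ∀ f ∈ B, x f = 0 := by
      intro f hf
      have h1 : z' f = 0 := hzero f hf
      have h2 : ι (x f) = 0 := by
        have h3 := congrArg
          (fun v => (AddMonoidAlgebra.single (-(fun i => ((f i : ℕ) : ℤ))) (1 : k) : (AddMonoidAlgebra k (Fin n → ℤ))) • v) h1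
        simpa [hz'def, smul_smul, huinv, one_smul, smul_zero] using h3
      exact hι_inj (by rw [h2, map_zero])
    rw [Finset.sum_congr rfl (fun f hf => by rw [hx0 f hf, TensorProduct.tmul_zero])]
    exact Finset.sum_const_zero
  have hinj : Function.Injective (LinearMap.liftBaseChange (AddMonoidAlgebra k (Fin n → ℤ)) ι) := by
    intro a b hab
    have h1 : (LinearMap.liftBaseChange (AddMonoidAlgebra k (Fin n → ℤ)) ι) (a - b) = 0 := by rw [map_sub, hab, sub_self]
    exact sub_eq_zero.mp (hker _ h1)
  have hfix : ∀ (c : Fin n → ℕ) (x : g), (∀ i, σ i x = ζ i ^ (c i) • x) →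
      ∀ i, T i ((AddMonoidAlgebra.single (fun j => ((c j : ℕ) : ℤ)) (1 : k) : (AddMonoidAlgebra k (Fin n → ℤ))) ⊗ₜ[k] x)
        = (AddMonoidAlgebra.single (fun j => ((c j : ℕ) : ℤ)) (1 : k) : (AddMonoidAlgebra k (Fin n → ℤ))) ⊗ₜ[k] x := by
    intro c x hx i
    rw [hTdef]
    simp only [TensorProduct.map_tmul, AlgEquiv.toLinearMap_apply]
    rw [hγ i (fun j => ((c j : ℕ) : ℤ))]
    have hco : (σ i).toLieHom.toLinearMap x = σ i x := rfl
    rw [hco, hx i, ← TensorProduct.smul_tmul', TensorProduct.tmul_smul, smul_smul,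
      zpow_neg, zpow_natCast, inv_mul_cancel₀ (pow_ne_zero _ (hζ0 i)), one_smul]
  have hsurjmem : ∀ v : (AddMonoidAlgebra k (Fin n → ℤ)) ⊗[k] g, v ∈ LinearMap.range (LinearMap.liftBaseChange (AddMonoidAlgebra k (Fin n → ℤ)) ι) := by
    have key : ∀ x : g, ∀ s : (AddMonoidAlgebra k (Fin n → ℤ)), s ⊗ₜ[k] x ∈ LinearMap.range (LinearMap.liftBaseChange (AddMonoidAlgebra k (Fin n → ℤ)) ι) := by
      have hspan := eigen_span (k := k) (g := g) m hm hmk ζ hζ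
          (fun i => (σ i).toLieHom.toLinearMap)
          (fun i j x => hσcomm i j x)
          (fun i x => by rw [Module.End.pow_apply]; exact hσord i x)
      intro x
      induction hspan x using Submodule.span_induction with
      | mem y hy =>
        choose c hc heigy using hy
        intro s
        have hfixy := hfix c y heigy
        obtain ⟨l, hl⟩ := (hι_range _).mpr hfixy
        refine ⟨(s * AddMonoidAlgebra.single (-(fun j => ((c j : ℕ) : ℤ))) (1 : k)) ⊗ₜ[↥(multiloopBase k n m)] l, ?_⟩
        rw [LinearMap.liftBaseChange_tmul, hl, TensorProduct.smul_tmul', smul_eq_mul,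
          mul_assoc, huinv, mul_one]
      | zero => intro s; rw [TensorProduct.tmul_zero]; exact zero_mem _
      | add y w _ _ hy hw =>
        intro s
        rw [TensorProduct.tmul_add]
        exact add_mem (hy s) (hw s)
      | smul a y _ hy =>
        intro s
        rw [← TensorProduct.smul_tmul]
        exact hy (a • s)
    intro v
    induction v using TensorProduct.induction_on with
    | zero => exact zero_mem _
    | tmul s x => exact key x s
    | add v w hv hw => exact add_mem hv hw
  have hsurj : Function.Surjective (LinearMap.liftBaseChange (AddMonoidAlgebra k (Fin n → ℤ)) ι) := by
    intro v
    obtain ⟨z, hz⟩ := hsurjmem v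
    exact ⟨z, hz⟩
  refine ⟨⟨hinj, hsurj⟩, ?_⟩
  intro a b
  induction a using TensorProduct.induction_on with
  | zero => rw [zero_lie, map_zero, zero_lie]
  | tmul s xx =>
    induction b using TensorProduct.induction_on with
    | zero => rw [lie_zero, map_zero, lie_zero]
    | tmul t yy =>
      rw [LieAlgebra.ExtendScalars.bracket_tmul, LinearMap.liftBaseChange_tmul,
        LinearMap.liftBaseChange_tmul, LinearMap.liftBaseChange_tmul, hι_lie,
        smul_lie, lie_smul, smul_smul]
    | add b1 b2 h1 h2 => rw [lie_add, map_add, h1, h2, map_add, ← lie_add]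
  | add a1 a2 h1 h2 => rw [add_lie, map_add, h1, h2, map_add, ← add_lie]
end
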